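/- arXiv:2402.13344 — 4 statements merged into one kernel-verified Lean document; each statement's English description precedes it below -/
import Mathlib

section
/- Let M₀, M₁ be structures in the same vocabulary, κ = |M₀^θ ∪ M₁^θ|, and α < κ⁺. If Eve has a winning strategy in DG^β_{θ,α}(M₀,M₁) for all β < κ⁺, then Eve has a winning strategy in the infinite game DG_{θ,α}(M₀,M₁). -/
open Cardinal Set FirstOrder FirstOrder.Language

universe u

namespace DGPaper

variable (L : FirstOrder.Language.{u, u})

/-- A partial isomorphism between two `L`-structures, given as the graph of a partial map.
It is functional, injective, preserves all relations (of positive arity) in both directions,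
and is compatible with the interpretations of all function symbols (including constants). -/
def IsPartialIso (M N : Type u) [L.Structure M] [L.Structure N] (g : Set (M × N)) : Prop :=
  (∀ ⦃a : M⦄ ⦃b b' : N⦄, (a, b) ∈ g → (a, b') ∈ g → b = b') ∧
  (∀ ⦃a a' : M⦄ ⦃b : N⦄, (a, b) ∈ g → (a', b) ∈ g → a = a') ∧
  (∀ (n : ℕ) (R : L.Relations (n + 1)) (x : Fin (n + 1) → M) (y : Fin (n + 1) → N),
      (∀ i, (x i, y i) ∈ g) →
        (Structure.RelMap R x ↔ Structure.RelMap R y)) ∧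
  (∀ (n : ℕ) (f : L.Functions n) (x : Fin n → M) (y : Fin n → N),
      (∀ i, (x i, y i) ∈ g) →
        (∀ b : N, (Structure.funMap f x, b) ∈ g → b = Structure.funMap f y) ∧
        (∀ a : M, (a, Structure.funMap f y) ∈ g → a = Structure.funMap f x))

/-- A `(θ, α)`-position in the similarity game on `(M, N)`:  a clock ordinal `ht`, sets
`A0 ⊆ M`, `A1 ⊆ N` of cardinality `≤ θ`, a partial isomorphism `g` between them, and
height functions `h0`, `h1` taking values `< α` on `A0`, `A1`, such that every element of
height `0` is matched by `g`. -/
structure Position (M N : Type u) [L.Structure M] [L.Structure N]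
    (θ : Cardinal.{u}) (α : Ordinal.{u}) : Type (u + 1) where
  ht : Ordinal.{u}
  A0 : Set M
  A1 : Set N
  A0_card : #A0 ≤ θ
  A1_card : #A1 ≤ θ
  g : Set (M × N)
  g_iso : IsPartialIso L M N g
  g_sub : g ⊆ A0 ×ˢ A1
  h0 : M → Ordinal.{u}
  h1 : N → Ordinal.{u}
  h0_lt : ∀ a ∈ A0, h0 a < α
  h1_lt : ∀ b ∈ A1, h1 b < α
  h0_zero : ∀ a ∈ A0, h0 a = 0 → ∃ b, (a, b) ∈ g
  h1_zero : ∀ b ∈ A1, h1 b = 0 → ∃ a, (a, b) ∈ g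

variable {M N : Type u} [L.Structure M] [L.Structure N] {θ : Cardinal.{u}} {α : Ordinal.{u}}

/-- `q` extends `p` (written `q < p` in the paper): the clock strictly decreases, the sets
grow, the partial isomorphism of `q` restricted to the old sets is that of `p`, and every
height strictly decreases unless it is already `0`. -/
def Extends (q p : Position L M N θ α) : Prop :=
  q.ht < p.ht ∧ p.A0 ⊆ q.A0 ∧ p.A1 ⊆ q.A1 ∧
  p.g ⊆ q.g ∧ (∀ a b, (a, b) ∈ q.g → a ∈ p.A0 → (a, b) ∈ p.g) ∧
  (∀ a ∈ p.A0, q.h0 a ≤ p.h0 a ∧ (p.h0 a ≠ 0 → q.h0 a < p.h0 a)) ∧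
  (∀ b ∈ p.A1, q.h1 b ≤ p.h1 b ∧ (p.h1 b ≠ 0 → q.h1 b < p.h1 b))

/-- The starting position `(β, ∅, ∅, ∅, ∅)`. -/
def startPos (β : Ordinal.{u}) : Position L M N θ α where
  ht := β
  A0 := ∅
  A1 := ∅
  A0_card := by simp
  A1_card := by simp
  g := ∅
  g_iso := by
    refine ⟨?_, ?_, ?_, ?_⟩ <;> intros <;> simp_all
  g_sub := by simp
  h0 := fun _ => 0
  h1 := fun _ => 0
  h0_lt := by simp
  h1_lt := by simp
  h0_zero := by simp
  h1_zero := by simp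

/-- Eve has a winning strategy in the similarity game from position `p`:  whatever clock
ordinal `β' < ht p` and sets `B0`, `B1` of size `≤ θ` Adam demands, Eve can move to an
extending position covering them from which she again has a winning strategy.  (Since the
clock strictly decreases, the game is finite, and this well-founded recursion captures
exactly the existence of a winning strategy for Eve.) -/
noncomputable def EveWinsFrom (θ : Cardinal.{u}) (α : Ordinal.{u})
    (p : Position L M N θ α) : Prop :=
  WellFounded.fix (C := fun _ : Ordinal.{u} => Position L M N θ α → Prop) Ordinal.lt_wf
    (fun o IH p =>
      ∀ β' (hβ : β' < o) (B0 : Set M) (B1 : Set N), #B0 ≤ θ → #B1 ≤ θ →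
        ∃ q : Position L M N θ α, Extends L q p ∧ q.ht = β' ∧
          B0 ⊆ q.A0 ∧ B1 ⊆ q.A1 ∧ IH β' hβ q)
    p.ht p

/-- Eve has a winning strategy in the game `DG^β_{θ,α}(M, N)`. -/
noncomputable def EveWinsGame (M N : Type u) [L.Structure M] [L.Structure N]
    (β : Ordinal.{u}) (θ : Cardinal.{u}) (α : Ordinal.{u}) : Prop :=
  EveWinsFrom L θ α (startPos L (M := M) (N := N) β)

/-- Adam has a winning strategy from position `p`: he can demand a clock ordinal
`β' < ht p` and sets `B0`, `B1` of size `≤ θ` such that every legal reply of Eve leads to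
a position from which Adam again has a winning strategy (in particular, if Eve has no
legal reply, she loses). -/
inductive AdamWinsFrom (θ : Cardinal.{u}) (α : Ordinal.{u}) :
    Position L M N θ α → Prop where
  | step (p : Position L M N θ α) (β' : Ordinal.{u}) (hβ : β' < p.ht)
      (B0 : Set M) (B1 : Set N) (hB0 : #B0 ≤ θ) (hB1 : #B1 ≤ θ)
      (h : ∀ q : Position L M N θ α, Extends L q p → q.ht = β' →
        B0 ⊆ q.A0 → B1 ⊆ q.A1 → AdamWinsFrom θ α q) :
      AdamWinsFrom θ α p

/-- Adam has a winning strategy in the game `DG^β_{θ,α}(M, N)`. -/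
def AdamWinsGame (M N : Type u) [L.Structure M] [L.Structure N]
    (β : Ordinal.{u}) (θ : Cardinal.{u}) (α : Ordinal.{u}) : Prop :=
  AdamWinsFrom L θ α (startPos L (M := M) (N := N) β)

/-- A position of the infinite game `DG_{θ,α}(M,N)` (no clock ordinal). -/
structure IPosition (M N : Type u) [L.Structure M] [L.Structure N]
    (θ : Cardinal.{u}) (α : Ordinal.{u}) : Type (u + 1) where
  A0 : Set M
  A1 : Set N
  A0_card : #A0 ≤ θ
  A1_card : #A1 ≤ θ
  g : Set (M × N)
  g_iso : IsPartialIso L M N g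
  g_sub : g ⊆ A0 ×ˢ A1
  h0 : M → Ordinal.{u}
  h1 : N → Ordinal.{u}
  h0_lt : ∀ a ∈ A0, h0 a < α
  h1_lt : ∀ b ∈ A1, h1 b < α
  h0_zero : ∀ a ∈ A0, h0 a = 0 → ∃ b, (a, b) ∈ g
  h1_zero : ∀ b ∈ A1, h1 b = 0 → ∃ a, (a, b) ∈ g

/-- Extension of positions in the infinite game. -/
def IExtends (q p : IPosition L M N θ α) : Prop :=
  p.A0 ⊆ q.A0 ∧ p.A1 ⊆ q.A1 ∧
  p.g ⊆ q.g ∧ (∀ a b, (a, b) ∈ q.g → a ∈ p.A0 → (a, b) ∈ p.g) ∧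
  (∀ a ∈ p.A0, q.h0 a ≤ p.h0 a ∧ (p.h0 a ≠ 0 → q.h0 a < p.h0 a)) ∧
  (∀ b ∈ p.A1, q.h1 b ≤ p.h1 b ∧ (p.h1 b ≠ 0 → q.h1 b < p.h1 b))

/-- The empty starting position of the infinite game. -/
def startIPos : IPosition L M N θ α where
  A0 := ∅
  A1 := ∅
  A0_card := by simp
  A1_card := by simp
  g := ∅
  g_iso := by
    refine ⟨?_, ?_, ?_, ?_⟩ <;> intros <;> simp_all
  g_sub := by simp
  h0 := fun _ => 0
  h1 := fun _ => 0
  h0_lt := by simp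
  h1_lt := by simp
  h0_zero := by simp
  h1_zero := by simp

/-- Eve has a winning strategy in the infinite game `DG_{θ,α}(M, N)` of length `ω`.
Since this game is closed for Eve, having a winning strategy is equivalent to having a
positional one, i.e. a set `K` of positions containing the starting position such that Eve
can answer any challenge of Adam while staying inside `K`. -/
def EveWinsInfGame (M N : Type u) [L.Structure M] [L.Structure N]
    (θ : Cardinal.{u}) (α : Ordinal.{u}) : Prop :=
  ∃ K : Set (IPosition L M N θ α), startIPos L ∈ K ∧
    ∀ p ∈ K, ∀ (B0 : Set M) (B1 : Set N), #B0 ≤ θ → #B1 ≤ θ →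
      ∃ q ∈ K, IExtends L q p ∧ B0 ⊆ q.A0 ∧ B1 ⊆ q.A1

end DGPaper

namespace DGPaper

open Cardinal Set FirstOrder FirstOrder.Language

universe v
variable (L : FirstOrder.Language.{v, v}) {M N : Type v} [L.Structure M] [L.Structure N]
  {θ : Cardinal.{v}} {α : Ordinal.{v}}

lemma eveWinsFrom_iff (p : Position L M N θ α) :
    EveWinsFrom L θ α p ↔ ∀ β' < p.ht, ∀ (B0 : Set M) (B1 : Set N), #B0 ≤ θ → #B1 ≤ θ →
      ∃ q : Position L M N θ α, Extends L q p ∧ q.ht = β' ∧ B0 ⊆ q.A0 ∧ B1 ⊆ q.A1 ∧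
        EveWinsFrom L θ α q := by
  unfold EveWinsFrom
  rw [WellFounded.fix_eq]
  constructor
  · intro h β' hβ B0 B1 hB0 hB1
    obtain ⟨q, h1, h2, h3, h4, h5⟩ := h β' hβ B0 B1 hB0 hB1
    subst h2
    exact ⟨q, h1, rfl, h3, h4, h5⟩
  · intro h β' hβ B0 B1 hB0 hB1
    obtain ⟨q, h1, h2, h3, h4, h5⟩ := h β' hβ B0 B1 hB0 hB1
    subst h2
    exact ⟨q, h1, rfl, h3, h4, h5⟩

/-- Change the clock of a position. -/
def Position.withHt (p : Position L M N θ α) (β : Ordinal.{v}) : Position L M N θ α :=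
  { p with ht := β }

lemma eveWinsFrom_withHt {p : Position L M N θ α} (h : EveWinsFrom L θ α p)
    {β : Ordinal.{v}} (hβ : β ≤ p.ht) : EveWinsFrom L θ α (p.withHt L β) := by
  rw [eveWinsFrom_iff]
  intro β' hβ' B0 B1 hB0 hB1
  obtain ⟨q, h1, h2, h3, h4, h5⟩ :=
    (eveWinsFrom_iff L p).mp h β' (lt_of_lt_of_le hβ' hβ) B0 B1 hB0 hB1
  obtain ⟨_, e2, e3, e4, e5, e6, e7⟩ := h1
  exact ⟨q, ⟨by rw [h2]; exact hβ', e2, e3, e4, e5, e6, e7⟩, h2, h3, h4, h5⟩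

/-- Forget the clock of a position. -/
def Position.flat (p : Position L M N θ α) : IPosition L M N θ α :=
  ⟨p.A0, p.A1, p.A0_card, p.A1_card, p.g, p.g_iso, p.g_sub, p.h0, p.h1, p.h0_lt, p.h1_lt,
    p.h0_zero, p.h1_zero⟩

/-- A clocked position realizes an unclocked one. -/
def FlatRel (q : Position L M N θ α) (r : IPosition L M N θ α) : Prop :=
  q.A0 = r.A0 ∧ q.A1 = r.A1 ∧ q.g = r.g ∧ (∀ a ∈ r.A0, q.h0 a = r.h0 a) ∧
    (∀ b ∈ r.A1, q.h1 b = r.h1 b)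

/-- Encoding of ordinals below `α` into a small type. -/
noncomputable def hEnc (α : Ordinal.{v}) (o : Ordinal.{v}) : Option α.ToType :=
  if h : o < α then some (Ordinal.ToType.mk ⟨o, h⟩) else none

lemma hEnc_inj {α : Ordinal.{v}} {o o' : Ordinal.{v}} (h : o < α) (h' : o' < α)
    (e : hEnc α o = hEnc α o') : o = o' := by
  rw [hEnc, hEnc, dif_pos h, dif_pos h'] at e
  have := (Ordinal.ToType.mk).injective (Option.some_injective _ e)
  exact congrArg Subtype.val this

/-- Small code for the flat part of a position. -/
noncomputable def code (q : Position L M N θ α) :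
    Set (((M ⊕ N) × Option α.ToType) ⊕ (M × N)) :=
  ((fun a => Sum.inl (Sum.inl a, hEnc α (q.h0 a))) '' q.A0) ∪
  ((fun b => Sum.inl (Sum.inr b, hEnc α (q.h1 b))) '' q.A1) ∪
  (Sum.inr '' q.g)

lemma code_eq {q q' : Position L M N θ α} (h : code L q = code L q') :
    q.A0 = q'.A0 ∧ q.A1 = q'.A1 ∧ q.g = q'.g ∧ (∀ a ∈ q.A0, q.h0 a = q'.h0 a) ∧
      (∀ b ∈ q.A1, q.h1 b = q'.h1 b) := by
  have key0 : ∀ (r r' : Position L M N θ α), code L r = code L r' → ∀ a ∈ r.A0,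
      a ∈ r'.A0 ∧ r.h0 a = r'.h0 a := by
    intro r r' hrr a ha
    have hmem : Sum.inl ((Sum.inl a : M ⊕ N), hEnc α (r.h0 a)) ∈ code L r' := by
      rw [← hrr]; exact Or.inl (Or.inl ⟨a, ha, rfl⟩)
    rcases hmem with ((⟨a', ha', e⟩ | ⟨b', hb', e⟩) | ⟨w, hw, e⟩)
    · simp only [Sum.inl.injEq, Sum.inr.injEq, Prod.mk.injEq] at e
      obtain ⟨e1, e2⟩ := e
      subst e1
      exact ⟨ha', (hEnc_inj (r'.h0_lt a' ha') (r.h0_lt a' ha) e2).symm⟩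
    · simp at e
    · simp at e
  have key1 : ∀ (r r' : Position L M N θ α), code L r = code L r' → ∀ b ∈ r.A1,
      b ∈ r'.A1 ∧ r.h1 b = r'.h1 b := by
    intro r r' hrr b hb
    have hmem : Sum.inl ((Sum.inr b : M ⊕ N), hEnc α (r.h1 b)) ∈ code L r' := by
      rw [← hrr]; exact Or.inl (Or.inr ⟨b, hb, rfl⟩)
    rcases hmem with ((⟨a', ha', e⟩ | ⟨b', hb', e⟩) | ⟨w, hw, e⟩)
    · simp at e
    · simp only [Sum.inl.injEq, Sum.inr.injEq, Prod.mk.injEq] at e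
      obtain ⟨e1, e2⟩ := e
      subst e1
      exact ⟨hb', (hEnc_inj (r'.h1_lt b' hb') (r.h1_lt b' hb) e2).symm⟩
    · simp at e
  have keyg : ∀ (r r' : Position L M N θ α), code L r = code L r' → r.g ⊆ r'.g := by
    intro r r' hrr w hw
    have hmem : (Sum.inr w : ((M ⊕ N) × Option α.ToType) ⊕ (M × N)) ∈ code L r' := by
      rw [← hrr]; exact Or.inr ⟨w, hw, rfl⟩
    rcases hmem with ((⟨a', ha', e⟩ | ⟨b', hb', e⟩) | ⟨w', hw', e⟩)
    · simp at e
    · simp at e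
    · simp only [Sum.inr.injEq] at e
      exact e ▸ hw'
  refine ⟨?_, ?_, Set.Subset.antisymm (keyg _ _ h) (keyg _ _ h.symm),
    fun a ha => (key0 _ _ h a ha).2, fun b hb => (key1 _ _ h b hb).2⟩
  · exact Set.Subset.antisymm (fun a ha => (key0 _ _ h a ha).1)
      (fun a ha => (key0 _ _ h.symm a ha).1)
  · exact Set.Subset.antisymm (fun b hb => (key1 _ _ h b hb).1)
      (fun b hb => (key1 _ _ h.symm b hb).1)


lemma mk_g_le (q : Position L M N θ α) : #q.g ≤ θ := by
  have : Function.Injective (fun w : q.g => (⟨w.1.1, (q.g_sub w.2).1⟩ : q.A0)) := by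
    rintro ⟨⟨a, b⟩, hw⟩ ⟨⟨a', b'⟩, hw'⟩ he
    simp only [Subtype.mk.injEq] at he
    subst he
    exact Subtype.ext (Prod.ext rfl (q.g_iso.1 hw hw'))
  exact (Cardinal.mk_le_of_injective this).trans q.A0_card

lemma code_card (q : Position L M N θ α) : #(code L q) ≤ θ + θ + θ := by
  refine le_trans (Cardinal.mk_le_mk_of_subset (Set.Subset.refl _)) ?_
  refine le_trans (Cardinal.mk_union_le _ _) ?_
  refine add_le_add (le_trans (Cardinal.mk_union_le _ _) (add_le_add ?_ ?_)) ?_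
  · exact le_trans Cardinal.mk_image_le q.A0_card
  · exact le_trans Cardinal.mk_image_le q.A1_card
  · exact le_trans Cardinal.mk_image_le (mk_g_le L q)

lemma mk_small_subsets (X : Type v) (c : Cardinal.{v}) :
    #{s : Set X // #s ≤ c} ≤ (#X + 1) ^ c := by
  classical
  have hrep : ∀ s : {s : Set X // #s ≤ c}, ∃ f : c.out → Option X,
      {x | some x ∈ Set.range f} = s.1 := by
    rintro ⟨s, hs⟩
    rw [← Cardinal.mk_out c] at hs
    obtain ⟨e⟩ := Cardinal.le_def _ _ |>.mp hs
    refine ⟨fun i => if h : ∃ x : s, e x = i then some (Classical.choose h).1 else none, ?_⟩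
    ext x
    simp only [Set.mem_setOf_eq, Set.mem_range]
    constructor
    · rintro ⟨i, hi⟩
      by_cases h : ∃ y : s, e y = i
      · rw [dif_pos h, Option.some.injEq] at hi
        exact hi ▸ (Classical.choose h).2
      · rw [dif_neg h] at hi
        exact absurd hi (by simp)
    · intro hx
      refine ⟨e ⟨x, hx⟩, ?_⟩
      have h : ∃ y : s, e y = e ⟨x, hx⟩ := ⟨⟨x, hx⟩, rfl⟩
      rw [dif_pos h, Option.some.injEq]
      exact congrArg Subtype.val (e.injective (Classical.choose_spec h))
  choose F hF using hrep
  have hinj : Function.Injective F := by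
    intro s t hst
    exact Subtype.ext (by rw [← hF s, ← hF t, hst])
  refine (Cardinal.mk_le_of_injective hinj).trans ?_
  rw [Cardinal.mk_arrow]
  simp [Cardinal.mk_out, Cardinal.mk_option]

lemma exhaust (hm0 : #M ≤ θ) (hm1 : #N ≤ θ) (j : ℕ) :
    ∀ q : Position L M N θ α, EveWinsFrom L θ α q → q.ht = (j : Ordinal.{v}) →
      Set.univ ⊆ q.A0 → Set.univ ⊆ q.A1 →
      ∃ q' : Position L M N θ α, Set.univ ⊆ q'.A0 ∧ Set.univ ⊆ q'.A1 ∧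
        (∀ a, q'.h0 a = 0 ∨ q'.h0 a + (j : Ordinal.{v}) ≤ q.h0 a) ∧
        (∀ b, q'.h1 b = 0 ∨ q'.h1 b + (j : Ordinal.{v}) ≤ q.h1 b) := by
  induction j with
  | zero =>
    intro q _ _ hA0 hA1
    exact ⟨q, hA0, hA1, fun a => Or.inr (by simp), fun b => Or.inr (by simp)⟩
  | succ j ih =>
    intro q hw hht hA0 hA1
    obtain ⟨q1, hext, hht1, hB0, hB1, hw1⟩ := (eveWinsFrom_iff L q).mp hw (j : Ordinal)
      (by rw [hht]; exact_mod_cast Nat.lt_succ_self j) Set.univ Set.univ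
      (by simpa using hm0) (by simpa using hm1)
    obtain ⟨q', h1, h2, h3, h4⟩ := ih q1 hw1 hht1 hB0 hB1
    obtain ⟨_, _, _, _, _, hh0, hh1⟩ := hext
    have step : ∀ (x y z : Ordinal.{v}), (x = 0 ∨ x + (j : Ordinal.{v}) ≤ y) →
        y ≤ z → (z ≠ 0 → y < z) → x = 0 ∨ x + ((j + 1 : ℕ) : Ordinal.{v}) ≤ z := by
      intro x y z hxy hyz hyz'
      rcases hxy with hx | hxy
      · exact Or.inl hx
      rcases eq_or_ne z 0 with hz | hz
      · subst hz
        rw [nonpos_iff_eq_zero.mp hyz] at hxy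
        exact Or.inl (nonpos_iff_eq_zero.mp ((le_self_add : x ≤ x + _).trans hxy))
      · right
        have : y + 1 ≤ z := by
          rw [Ordinal.add_one_eq_succ]
          exact Order.succ_le_of_lt (hyz' hz)
        calc x + ((j + 1 : ℕ) : Ordinal.{v}) = x + ((j : Ordinal.{v}) + 1) := by
              rw [Nat.cast_succ]
          _ = (x + (j : Ordinal.{v})) + 1 := by rw [add_assoc]
          _ ≤ y + 1 := add_le_add_left hxy 1
          _ ≤ z := this
    refine ⟨q', h1, h2, fun a => step _ _ _ (h3 a) (hh0 a (hA0 (mem_univ a))).1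
      (hh0 a (hA0 (mem_univ a))).2, fun b => step _ _ _ (h4 b) (hh1 b (hA1 (mem_univ b))).1
      (hh1 b (hA1 (mem_univ b))).2⟩

lemma pow_theta_le {a b c : Cardinal.{v}} (hab : a ≤ b) (hinf : ℵ₀ ≤ a ^ c + b ^ c) :
    (a ^ c + b ^ c) ^ c ≤ a ^ c + b ^ c := by
  have hθ : c ≠ 0 := by
    rintro rfl
    simp only [Cardinal.power_zero] at hinf
    exact absurd ((Cardinal.nat_lt_aleph0 2).trans_le hinf)
      (by rw [show ((2:ℕ):Cardinal) = 1 + 1 by norm_cast]; exact lt_irrefl _)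
  have hθ1 : (1 : Cardinal.{v}) ≤ c := Cardinal.one_le_iff_ne_zero.mpr hθ
  have h1 : a ^ c ≤ b ^ c := Cardinal.power_le_power_right hab
  have hc : ℵ₀ ≤ b ^ c := by
    by_contra hcon
    push_neg at hcon
    exact absurd (Cardinal.add_lt_aleph0 (h1.trans_lt hcon) hcon) (not_lt.mpr hinf)
  have hk : a ^ c + b ^ c = b ^ c := le_antisymm
    (by calc a ^ c + b ^ c ≤ b ^ c + b ^ c := add_le_add_left h1 _
          _ = b ^ c := Cardinal.add_eq_self hc)
    (self_le_add_left _ _)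
  rw [hk, ← Cardinal.power_mul]
  rcases lt_or_ge c ℵ₀ with hfin | hinf'
  · obtain ⟨n, rfl⟩ := Cardinal.lt_aleph0.mp hfin
    have hb : ℵ₀ ≤ b := by
      by_contra hbc
      push_neg at hbc
      exact absurd (Cardinal.power_lt_aleph0 hbc hfin) (not_lt.mpr hc)
    have hn : 1 ≤ n := by exact_mod_cast hθ1
    rw [← Nat.cast_mul, Cardinal.power_natCast, Cardinal.power_nat_eq hb (by nlinarith),
      Cardinal.power_natCast, Cardinal.power_nat_eq hb hn]
  · rw [Cardinal.mul_eq_self hinf']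

lemma no_win_overflow0 (hθ1 : 1 ≤ θ) (hθfin : θ < ℵ₀) (hm : θ < #M) {β : Ordinal.{v}}
    (hβ : (1 : Ordinal.{v}) < β)
    (hw : EveWinsFrom L θ α (startPos L (M := M) (N := N) β)) : False := by
  obtain ⟨S, hS⟩ := Cardinal.le_mk_iff_exists_set.mp hm.le
  obtain ⟨q1, hext1, hht1, hSq, -, hw1⟩ := (eveWinsFrom_iff L _).mp hw 1 hβ S ∅
    (le_of_eq hS) (by simp)
  have hex : ∃ x, x ∉ q1.A0 := by
    by_contra hcon
    push_neg at hcon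
    have hle : #M ≤ θ := by
      have huniv : (Set.univ : Set M) ⊆ q1.A0 := fun x _ => hcon x
      calc #M = #(Set.univ : Set M) := (Cardinal.mk_univ).symm
        _ ≤ #q1.A0 := Cardinal.mk_le_mk_of_subset huniv
        _ ≤ θ := q1.A0_card
    exact absurd hle (not_le.mpr hm)
  obtain ⟨x, hx⟩ := hex
  obtain ⟨q2, hext2, hht2, hxq, -, -⟩ := (eveWinsFrom_iff L _).mp hw1 0
    (by rw [hht1]; exact zero_lt_one) {x} ∅ (by simpa using hθ1) (by simp)
  have hsub : insert x S ⊆ q2.A0 := by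
    intro y hy
    rcases Set.mem_insert_iff.mp hy with rfl | hy
    · exact hxq rfl
    · exact hext2.2.1 (hSq hy)
  have hxS : x ∉ S := fun h => hx (hSq h)
  have hcontra : θ + 1 ≤ θ := by
    calc θ + 1 = #(insert x S : Set M) := by rw [Cardinal.mk_insert hxS, hS]
      _ ≤ #q2.A0 := Cardinal.mk_le_mk_of_subset hsub
      _ ≤ θ := q2.A0_card
  obtain ⟨n, rfl⟩ := Cardinal.lt_aleph0.mp hθfin
  have : n + 1 ≤ n := by exact_mod_cast hcontra
  omega

lemma no_win_overflow1 (hθ1 : 1 ≤ θ) (hθfin : θ < ℵ₀) (hm : θ < #N) {β : Ordinal.{v}}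
    (hβ : (1 : Ordinal.{v}) < β)
    (hw : EveWinsFrom L θ α (startPos L (M := M) (N := N) β)) : False := by
  obtain ⟨S, hS⟩ := Cardinal.le_mk_iff_exists_set.mp hm.le
  obtain ⟨q1, hext1, hht1, -, hSq, hw1⟩ := (eveWinsFrom_iff L _).mp hw 1 hβ ∅ S
    (by simp) (le_of_eq hS)
  have hex : ∃ x, x ∉ q1.A1 := by
    by_contra hcon
    push_neg at hcon
    have hle : #N ≤ θ := by
      have huniv : (Set.univ : Set N) ⊆ q1.A1 := fun x _ => hcon x
      calc #N = #(Set.univ : Set N) := (Cardinal.mk_univ).symm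
        _ ≤ #q1.A1 := Cardinal.mk_le_mk_of_subset huniv
        _ ≤ θ := q1.A1_card
    exact absurd hle (not_le.mpr hm)
  obtain ⟨x, hx⟩ := hex
  obtain ⟨q2, hext2, hht2, -, hxq, -⟩ := (eveWinsFrom_iff L _).mp hw1 0
    (by rw [hht1]; exact zero_lt_one) ∅ {x} (by simp) (by simpa using hθ1)
  have hsub : insert x S ⊆ q2.A1 := by
    intro y hy
    rcases Set.mem_insert_iff.mp hy with rfl | hy
    · exact hxq rfl
    · exact hext2.2.2.1 (hSq hy)
  have hxS : x ∉ S := fun h => hx (hSq h)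
  have hcontra : θ + 1 ≤ θ := by
    calc θ + 1 = #(insert x S : Set N) := by rw [Cardinal.mk_insert hxS, hS]
      _ ≤ #q2.A1 := Cardinal.mk_le_mk_of_subset hsub
      _ ≤ θ := q2.A1_card
  obtain ⟨n, rfl⟩ := Cardinal.lt_aleph0.mp hθfin
  have : n + 1 ≤ n := by exact_mod_cast hcontra
  omega

end DGPaper

open DGPaper in
/-- Proposition `proposition:very-big-beta`.  Let `M₀`, `M₁` be
structures in the same vocabulary, `κ = |M₀^θ ∪ M₁^θ|` and `α < κ⁺`.  If Eve has a
winning strategy in `DG^β_{θ,α}(M₀,M₁)` for all `β < κ⁺`, then Eve has a winning strategy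
in the infinite game `DG_{θ,α}(M₀,M₁)`. -/
theorem eve_wins_inf_of_all_clocks (L : FirstOrder.Language.{u, u})
    (M₀ M₁ : Type u) [L.Structure M₀] [L.Structure M₁]
    (θ : Cardinal.{u}) (α : Ordinal.{u}) (κ : Cardinal.{u})
    (hκ : κ = #M₀ ^ θ + #M₁ ^ θ)
    (hα : α < (Order.succ κ).ord)
    (hwin : ∀ β < (Order.succ κ).ord, EveWinsGame L M₀ M₁ β θ α) :
    EveWinsInfGame L M₀ M₁ θ α := by
  classical
  have trivK : (∀ B0 : Set M₀, #B0 ≤ θ → B0 = ∅) → (∀ B1 : Set M₁, #B1 ≤ θ → B1 = ∅) →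
      EveWinsInfGame L M₀ M₁ θ α := by
    intro h0 h1
    refine ⟨{startIPos L}, Set.mem_singleton _, ?_⟩
    intro p hp B0 B1 hB0 hB1
    rw [Set.mem_singleton_iff] at hp
    subst hp
    refine ⟨startIPos L, Set.mem_singleton _, ?_, ?_, ?_⟩
    · exact ⟨Set.Subset.rfl, Set.Subset.rfl, Set.Subset.rfl,
        fun a b hab _ => hab, fun a ha => absurd ha (Set.notMem_empty a),
        fun b hb => absurd hb (Set.notMem_empty b)⟩
    · rw [h0 B0 hB0]; exact Set.empty_subset _
    · rw [h1 B1 hB1]; exact Set.empty_subset _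
  rcases lt_or_ge κ ℵ₀ with hfin | hinf
  · -- κ finite
    rcases eq_or_ne θ 0 with rfl | hθ0
    · refine trivK (fun B hB => ?_) (fun B hB => ?_) <;>
        exact Set.isEmpty_coe_sort.mp (Cardinal.mk_eq_zero_iff.mp
          (le_antisymm hB zero_le))
    have hθ1 : 1 ≤ θ := Cardinal.one_le_iff_ne_zero.mpr hθ0
    have h2top : ((2 : ℕ) : Ordinal) < (Order.succ κ).ord ∨ κ < 2 := by
      rcases lt_or_ge κ 2 with h | h
      · exact Or.inr h
      · refine Or.inl (Cardinal.lt_ord.mpr ?_)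
        rw [Ordinal.card_nat]
        exact_mod_cast h.trans_lt (Order.lt_succ κ)
    by_cases hm0 : #M₀ ≤ θ
    · by_cases hm1 : #M₁ ≤ θ
      · -- exhaustion
        obtain ⟨n, hn⟩ := Cardinal.lt_aleph0.mp hfin
        rcases Nat.eq_zero_or_pos n with rfl | hnpos
        · -- κ = 0, both models empty
          rw [hn] at hκ
          simp only [Nat.cast_zero] at hκ
          have hz0 : #M₀ ^ θ = 0 := le_antisymm (hκ.symm ▸ le_self_add) zero_le
          have hz1 : #M₁ ^ θ = 0 := le_antisymm (hκ.symm ▸ self_le_add_left _ _) zero_le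
          haveI : IsEmpty M₀ := Cardinal.mk_eq_zero_iff.mp
            (by by_contra hc; exact Cardinal.power_ne_zero θ hc hz0)
          haveI : IsEmpty M₁ := Cardinal.mk_eq_zero_iff.mp
            (by by_contra hc; exact Cardinal.power_ne_zero θ hc hz1)
          exact trivK (fun B _ => Set.eq_empty_of_isEmpty B)
            (fun B _ => Set.eq_empty_of_isEmpty B)
        · obtain ⟨m, rfl⟩ : ∃ m, n = m + 1 := ⟨n - 1, (Nat.succ_pred_eq_of_pos hnpos).symm⟩
          have hsucc : Order.succ κ = ((m + 2 : ℕ) : Cardinal) := by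
            rw [hn]
            exact (Cardinal.nat_succ (m + 1)).symm
          have htop : ((m + 1 : ℕ) : Ordinal) < (Order.succ κ).ord := by
            rw [hsucc, Cardinal.ord_nat]
            exact_mod_cast Nat.lt_succ_self (m + 1)
          have hw := hwin _ htop
          obtain ⟨q1, hext1, hht1, hA0, hA1, hw1⟩ := (eveWinsFrom_iff L _).mp hw
            ((m : ℕ) : Ordinal)
            (by show ((m : ℕ) : Ordinal) < ((m + 1 : ℕ) : Ordinal); exact_mod_cast Nat.lt_succ_self m)
            Set.univ Set.univ (by simpa using hm0) (by simpa using hm1)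
          obtain ⟨q', hu0, hu1, hh0, hh1⟩ := exhaust L hm0 hm1 m q1 hw1 hht1 hA0 hA1
          have hα' : α ≤ ((m + 1 : ℕ) : Ordinal) := by
            have h := hα
            rw [hsucc, Cardinal.ord_nat] at h
            rwa [show ((m + 2 : ℕ) : Ordinal) = Order.succ ((m + 1 : ℕ) : Ordinal) from
              Ordinal.natCast_succ (m + 1), Order.lt_succ_iff] at h
          have hz0 : ∀ a, q'.h0 a = 0 := by
            intro a
            by_contra hne
            rcases hh0 a with h | h
            · exact hne h
            · have hlt : q1.h0 a < ((m + 1 : ℕ) : Ordinal) :=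
                (q1.h0_lt a (hA0 (Set.mem_univ a))).trans_le hα'
              have hge : ((m + 1 : ℕ) : Ordinal) ≤ q1.h0 a := by
                calc ((m + 1 : ℕ) : Ordinal) = 1 + (m : ℕ) := by
                      rw [Nat.add_comm m 1, Nat.cast_add, Nat.cast_one]
                  _ ≤ q'.h0 a + (m : ℕ) :=
                      add_le_add_left (Ordinal.one_le_iff_ne_zero.mpr hne) _
                  _ ≤ q1.h0 a := h
              exact absurd hlt (not_lt.mpr hge)
          have hz1 : ∀ b, q'.h1 b = 0 := by
            intro b
            by_contra hne
            rcases hh1 b with h | h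
            · exact hne h
            · have hlt : q1.h1 b < ((m + 1 : ℕ) : Ordinal) :=
                (q1.h1_lt b (hA1 (Set.mem_univ b))).trans_le hα'
              have hge : ((m + 1 : ℕ) : Ordinal) ≤ q1.h1 b := by
                calc ((m + 1 : ℕ) : Ordinal) = 1 + (m : ℕ) := by
                      rw [Nat.add_comm m 1, Nat.cast_add, Nat.cast_one]
                  _ ≤ q'.h1 b + (m : ℕ) :=
                      add_le_add_left (Ordinal.one_le_iff_ne_zero.mpr hne) _
                  _ ≤ q1.h1 b := h
              exact absurd hlt (not_lt.mpr hge)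
          refine ⟨{startIPos L, Position.flat L q'}, Set.mem_insert _ _, ?_⟩
          intro p hp B0 B1 hB0 hB1
          have hcov0 : B0 ⊆ (Position.flat L q').A0 := fun x _ => hu0 (Set.mem_univ x)
          have hcov1 : B1 ⊆ (Position.flat L q').A1 := fun x _ => hu1 (Set.mem_univ x)
          refine ⟨Position.flat L q', Set.mem_insert_iff.mpr (Or.inr rfl), ?_, hcov0, hcov1⟩
          rcases Set.mem_insert_iff.mp hp with rfl | hp
          · exact ⟨Set.empty_subset _, Set.empty_subset _, Set.empty_subset _,
              fun a b _ ha => absurd ha (Set.notMem_empty a),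
              fun a ha => absurd ha (Set.notMem_empty a),
              fun b hb => absurd hb (Set.notMem_empty b)⟩
          · rw [Set.mem_singleton_iff] at hp
            subst hp
            exact ⟨Set.Subset.rfl, Set.Subset.rfl, Set.Subset.rfl, fun a b h _ => h,
              fun a _ => ⟨le_rfl, fun hne => absurd (hz0 a) hne⟩,
              fun b _ => ⟨le_rfl, fun hne => absurd (hz1 b) hne⟩⟩
      · -- overflow on M₁
        exfalso
        have h2 : (2 : Cardinal) ≤ #M₁ := by
          have h1m : 1 < #M₁ := hθ1.trans_lt (not_le.mp hm1)
          calc (2 : Cardinal) = 1 + 1 := by norm_num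
            _ ≤ Order.succ 1 := Cardinal.add_one_le_succ 1
            _ ≤ #M₁ := Order.succ_le_of_lt h1m
        have hθfin : θ < ℵ₀ := by
          calc θ < 2 ^ θ := Cardinal.cantor θ
            _ ≤ #M₁ ^ θ := Cardinal.power_le_power_right h2
            _ ≤ κ := hκ ▸ self_le_add_left _ _
            _ < ℵ₀ := hfin
        rcases h2top with h2top | hsmall
        · exact no_win_overflow1 L hθ1 hθfin (not_le.mp hm1)
            (by exact_mod_cast (by norm_num : (1:ℕ) < 2)) (hwin _ h2top)
        · -- κ < 2 but κ ≥ #M₁^θ ≥ 2^θ ≥ 2 : contradiction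
          have : (2 : Cardinal) ≤ κ := by
            calc (2 : Cardinal) ≤ #M₁ := h2
              _ ≤ #M₁ ^ θ := Cardinal.self_le_power _ hθ1
              _ ≤ κ := hκ ▸ self_le_add_left _ _
          exact absurd this (not_le.mpr hsmall)
    · -- overflow on M₀
      exfalso
      have h2 : (2 : Cardinal) ≤ #M₀ := by
        have h1m : 1 < #M₀ := hθ1.trans_lt (not_le.mp hm0)
        calc (2 : Cardinal) = 1 + 1 := by norm_num
          _ ≤ Order.succ 1 := Cardinal.add_one_le_succ 1
          _ ≤ #M₀ := Order.succ_le_of_lt h1m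
      have hθfin : θ < ℵ₀ := by
        calc θ < 2 ^ θ := Cardinal.cantor θ
          _ ≤ #M₀ ^ θ := Cardinal.power_le_power_right h2
          _ ≤ κ := hκ ▸ le_self_add
          _ < ℵ₀ := hfin
      rcases h2top with h2top | hsmall
      · exact no_win_overflow0 L hθ1 hθfin (not_le.mp hm0)
          (by exact_mod_cast (by norm_num : (1:ℕ) < 2)) (hwin _ h2top)
      · have : (2 : Cardinal) ≤ κ := by
          calc (2 : Cardinal) ≤ #M₀ := h2
            _ ≤ #M₀ ^ θ := Cardinal.self_le_power _ hθ1
            _ ≤ κ := hκ ▸ le_self_add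
        exact absurd this (not_le.mpr hsmall)
  · -- κ infinite: the pigeonhole argument
    have hθ1 : (1 : Cardinal) ≤ θ := by
      by_contra hcon
      have hθ0 : θ = 0 := by
        rcases Cardinal.lt_one_iff_zero.mp (not_le.mp hcon) with h
        exact h
      rw [hθ0] at hκ
      simp only [Cardinal.power_zero] at hκ
      rw [hκ] at hinf
      exact absurd ((Cardinal.nat_lt_aleph0 2).trans_le
        (by rwa [show ((2:ℕ):Cardinal) = 1 + 1 by norm_cast])) (lt_irrefl _)
    have hpow : κ ^ θ ≤ κ := by
      rcases le_total #M₀ #M₁ with hab | hab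
      · rw [hκ]
        exact pow_theta_le hab (hκ ▸ hinf)
      · rw [hκ, add_comm]
        exact pow_theta_le hab (by rw [add_comm]; exact hκ ▸ hinf)
    have h1κ : (1 : Cardinal) ≤ κ := Cardinal.one_le_aleph0.trans hinf
    have hm0κ : #M₀ ≤ κ := (Cardinal.self_le_power _ hθ1).trans (hκ ▸ le_self_add)
    have hm1κ : #M₁ ≤ κ := (Cardinal.self_le_power _ hθ1).trans (hκ ▸ self_le_add_left _ _)
    have hακ : α.card ≤ κ := Order.lt_succ_iff.mp (Cardinal.lt_ord.mp hα)
    have addκ : ∀ {a b : Cardinal.{u}}, a ≤ κ → b ≤ κ → a + b ≤ κ := fun ha hb =>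
      (add_le_add ha hb).trans (Cardinal.add_eq_self hinf).le
    have mulκ : ∀ {a b : Cardinal.{u}}, a ≤ κ → b ≤ κ → a * b ≤ κ := fun ha hb =>
      (mul_le_mul' ha hb).trans (Cardinal.mul_eq_self hinf).le
    have hCXκ : #(((M₀ ⊕ M₁) × Option α.ToType) ⊕ (M₀ × M₁)) + 1 ≤ κ := by
      have h1 : #(((M₀ ⊕ M₁) × Option α.ToType) ⊕ (M₀ × M₁)) ≤ κ := by
        simp only [Cardinal.mk_sum, Cardinal.mk_prod, Cardinal.mk_option,
          Cardinal.mk_toType, Cardinal.lift_id]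
        exact addκ (mulκ (addκ hm0κ hm1κ) (addκ hακ h1κ)) (mulκ hm0κ hm1κ)
      exact addκ h1 h1κ
    have hE : #{s : Set (((M₀ ⊕ M₁) × Option α.ToType) ⊕ (M₀ × M₁)) // #s ≤ θ + θ + θ} ≤ κ := by
      refine (mk_small_subsets _ (θ + θ + θ)).trans ?_
      calc (#(((M₀ ⊕ M₁) × Option α.ToType) ⊕ (M₀ × M₁)) + 1) ^ (θ + θ + θ)
          ≤ κ ^ (θ + θ + θ) := Cardinal.power_le_power_right hCXκ
        _ = κ ^ θ * κ ^ θ * κ ^ θ := by rw [Cardinal.power_add, Cardinal.power_add]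
        _ ≤ κ := mulκ (mulκ hpow hpow) hpow
    have htoplim : ∀ {β : Ordinal.{u}}, β < (Order.succ κ).ord → β + 1 < (Order.succ κ).ord := by
      intro β hβ
      rw [Ordinal.add_one_eq_succ]
      exact (Cardinal.isSuccLimit_ord (hinf.trans (Order.le_succ κ))).succ_lt hβ
    refine ⟨{r | ∀ β < (Order.succ κ).ord, ∃ q : Position L M₀ M₁ θ α,
      EveWinsFrom L θ α q ∧ q.ht = β ∧ FlatRel L q r}, ?_, ?_⟩
    · intro β hβ
      exact ⟨startPos L β, hwin β hβ, rfl, rfl, rfl, rfl,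
        fun a ha => absurd ha (Set.notMem_empty a),
        fun b hb => absurd hb (Set.notMem_empty b)⟩
    · intro r hr B0 B1 hB0 hB1
      have hresp : ∀ β : Set.Iio (Order.succ κ).ord, ∃ q : Position L M₀ M₁ θ α,
          EveWinsFrom L θ α q ∧ q.ht = β.1 ∧ B0 ⊆ q.A0 ∧ B1 ⊆ q.A1 ∧
          r.A0 ⊆ q.A0 ∧ r.A1 ⊆ q.A1 ∧ r.g ⊆ q.g ∧
          (∀ a b, (a, b) ∈ q.g → a ∈ r.A0 → (a, b) ∈ r.g) ∧
          (∀ a ∈ r.A0, q.h0 a ≤ r.h0 a ∧ (r.h0 a ≠ 0 → q.h0 a < r.h0 a)) ∧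
          (∀ b ∈ r.A1, q.h1 b ≤ r.h1 b ∧ (r.h1 b ≠ 0 → q.h1 b < r.h1 b)) := by
        rintro ⟨β, hβ⟩
        obtain ⟨p, hpw, hpht, hpA0, hpA1, hpg, hph0, hph1⟩ := hr (β + 1) (htoplim hβ)
        obtain ⟨q, hext, hqht, hqB0, hqB1, hqw⟩ := (eveWinsFrom_iff L p).mp hpw β
          (by rw [hpht, Ordinal.add_one_eq_succ]; exact Order.lt_succ β) B0 B1 hB0 hB1
        obtain ⟨-, e2, e3, e4, e5, e6, e7⟩ := hext
        refine ⟨q, hqw, hqht, hqB0, hqB1, hpA0 ▸ e2, hpA1 ▸ e3, hpg ▸ e4, ?_, ?_, ?_⟩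
        · intro a b hab ha
          rw [← hpg]
          exact e5 a b hab (by rw [hpA0]; exact ha)
        · intro a ha
          have ha' : a ∈ p.A0 := by rw [hpA0]; exact ha
          have h := e6 a ha'
          rwa [hph0 a ha] at h
        · intro b hb
          have hb' : b ∈ p.A1 := by rw [hpA1]; exact hb
          have h := e7 b hb'
          rwa [hph1 b hb] at h
      choose f hf using hresp
      set cd : Set.Iio (Order.succ κ).ord →
          {s : Set (((M₀ ⊕ M₁) × Option α.ToType) ⊕ (M₀ × M₁)) // #s ≤ θ + θ + θ} :=
        fun β => ⟨code L (f β), code_card L (f β)⟩ with hcd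
      have key : ∃ i : Set.Iio (Order.succ κ).ord, ∀ γ : Set.Iio (Order.succ κ).ord,
          ∃ j : Set.Iio (Order.succ κ).ord, γ.1 ≤ j.1 ∧ cd j = cd i := by
        by_contra hcon
        push_neg at hcon
        choose G hG using hcon
        have h0top : (0 : Ordinal) < (Order.succ κ).ord := by
          refine Cardinal.lt_ord.mpr ?_
          rw [Ordinal.card_zero]
          exact (zero_le : (0 : Cardinal) ≤ κ).trans_lt (Order.lt_succ κ)
        set F : {s : Set (((M₀ ⊕ M₁) × Option α.ToType) ⊕ (M₀ × M₁)) // #s ≤ θ + θ + θ} →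
            Ordinal.{u} :=
          fun e => if h : ∃ i, cd i = e then (G (Classical.choose h)).1 else 0 with hF
        have hFlt : ∀ e, F e < (Order.succ κ).ord := by
          intro e
          rw [hF]
          dsimp only
          split
          · exact (G _).2
          · exact h0top
        have hsup : iSup F < (Order.succ κ).ord :=
          Cardinal.iSup_lt_ord_of_isRegular (Cardinal.isRegular_succ hinf)
            (hE.trans_lt (Order.lt_succ κ)) hFlt
        have hmem : ∃ i, cd i = cd ⟨iSup F, hsup⟩ := ⟨_, rfl⟩
        have hle : (G (Classical.choose hmem)).1 ≤ iSup F := by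
          have heq : F (cd ⟨iSup F, hsup⟩) = (G (Classical.choose hmem)).1 := dif_pos hmem
          rw [← heq]
          exact Ordinal.le_iSup F _
        exact hG (Classical.choose hmem) ⟨iSup F, hsup⟩ hle (Classical.choose_spec hmem).symm
      obtain ⟨i, hi⟩ := key
      obtain ⟨hwi, hhti, hBi0, hBi1, hrA0, hrA1, hrg, hrback, hrh0, hrh1⟩ := hf i
      refine ⟨Position.flat L (f i), ?_, ⟨hrA0, hrA1, hrg, hrback, hrh0, hrh1⟩, hBi0, hBi1⟩
      intro γ hγ
      obtain ⟨j, hle, hcdj⟩ := hi ⟨γ, hγ⟩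
      have hcode : code L (f j) = code L (f i) := congrArg Subtype.val hcdj
      obtain ⟨cA0, cA1, cg, ch0, ch1⟩ := code_eq L hcode
      refine ⟨(f j).withHt L γ,
        eveWinsFrom_withHt L (hf j).1 (by rw [(hf j).2.1]; exact hle), rfl, ?_⟩
      exact ⟨cA0, cA1, cg, fun a ha => ch0 a (by rw [cA0]; exact ha),
        fun b hb => ch1 b (by rw [cA1]; exact hb)⟩
end

section
/- Let n be a natural number, λ a regular uncountable cardinal, I a set with |I| < λ and |I^ω| = |I|, and T a fully λ-splitting subtree of λ^{≤n}. Then for any function F : T → I there exist a fully λ-splitting subtree R ⊆ T and a function d : {0,…,n} → I such that F(s) = d(|s|) for all s ∈ R. -/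
open Cardinal

universe u

/-- `T` is a subtree of `λ^{≤n}`: a prefix-closed set of sequences (of length `≤ n`) of
elements of a type indexing `λ`, containing the empty sequence. -/
def IsSubtree {ι : Type u} (n : ℕ) (T : Set (List ι)) : Prop :=
  [] ∈ T ∧ (∀ s ∈ T, s.length ≤ n) ∧ ∀ s ∈ T, ∀ t : List ι, t.IsPrefix s → t ∈ T

/-- `T` is a fully `λ`-splitting subtree of `λ^{≤n}`:  every node of length `< n` has
exactly `λ` many immediate successors in `T`. -/
def IsFullySplitting {ι : Type u} (lam : Cardinal.{u}) (n : ℕ) (T : Set (List ι)) : Prop :=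
  IsSubtree n T ∧ ∀ s ∈ T, s.length < n → #{ξ : ι | s ++ [ξ] ∈ T} = lam

open scoped Classical

/-- Auxiliary coloring: `Gaux m s` records the color of `s` together with a chosen
stable sequence of colors below `s`. -/
noncomputable def Gaux {ι I : Type u} (lam : Cardinal.{u}) (T : Set (List ι))
    (F : List ι → I) : ℕ → List ι → List I
  | 0, s => [F s]
  | (m+1), s => F s ::
      (if h : ∃ g : List I, #{ξ : ι | s ++ [ξ] ∈ T ∧ Gaux lam T F m (s ++ [ξ]) = g} = lam
       then h.choose else [])

theorem Gaux_headI {ι I : Type u} [Inhabited I] (lam : Cardinal.{u}) (T : Set (List ι))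
    (F : List ι → I) (m : ℕ) (s : List ι) : (Gaux lam T F m s).headI = F s := by
  cases m <;> simp [Gaux]

/-- Regular pigeonhole: a set of size `lam` colored with fewer than `lam` colors has a
fiber of size `lam`. -/
theorem pigeon {lam : Cardinal.{u}} (hreg : lam.IsRegular) {ι J : Type u} (hJ : #J < lam)
    {A : Set ι} (hA : #A = lam) (c : ι → J) :
    ∃ g : J, #{ξ : ι | ξ ∈ A ∧ c ξ = g} = lam := by
  by_contra hcon
  push_neg at hcon
  have hlt : ∀ g : J, #{ξ : ι | ξ ∈ A ∧ c ξ = g} < lam := by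
    intro g
    refine lt_of_le_of_ne ?_ (hcon g)
    calc #{ξ : ι | ξ ∈ A ∧ c ξ = g} ≤ #A := Cardinal.mk_le_mk_of_subset (fun x hx => hx.1)
      _ = lam := hA
  have hsub : A ⊆ ⋃ g : J, {ξ : ι | ξ ∈ A ∧ c ξ = g} := by
    intro x hx
    exact Set.mem_iUnion.2 ⟨c x, hx, rfl⟩
  have hle : #A ≤ Cardinal.sum fun g : J => #{ξ : ι | ξ ∈ A ∧ c ξ = g} :=
    (Cardinal.mk_le_mk_of_subset hsub).trans Cardinal.mk_iUnion_le_sum_mk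
  have hlt2 : Cardinal.sum (fun g : J => #{ξ : ι | ξ ∈ A ∧ c ξ = g}) < lam :=
    Cardinal.sum_lt_of_isRegular hreg hJ hlt
  exact absurd (hA ▸ hle) (not_le.2 hlt2)

/-- the stabilisation claim.  Let `n` be a natural number, `λ` a
regular uncountable cardinal, `I` a set with `|I| < λ` and `|I^ω| = |I|`, and `T` a fully
`λ`-splitting subtree of `λ^{≤n}` (whose levels we index by the type `λ.ord.toType` of
cardinality `λ`).  Then for any `F : T → I` there exist a fully `λ`-splitting subtree
`R ⊆ T` and `d : {0,…,n} → I` with `F(s) = d(|s|)` for all `s ∈ R`. -/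
theorem fully_splitting_stabilize (n : ℕ) (lam : Cardinal.{u})
    (hreg : lam.IsRegular) (hunc : Cardinal.aleph0 < lam)
    (I : Type u) (hI : #I < lam) (hIω : #I ^ Cardinal.aleph0 = #I)
    (T : Set (List lam.ord.ToType)) (hT : IsFullySplitting lam n T)
    (F : List lam.ord.ToType → I) :
    ∃ R : Set (List lam.ord.ToType), R ⊆ T ∧ IsFullySplitting lam n R ∧
      ∃ d : ℕ → I, ∀ s ∈ R, F s = d s.length := by
  classical
  letI : Inhabited I := ⟨F []⟩
  have hListI : #(List I) < lam := by
    rw [Cardinal.mk_list_eq_max_mk_aleph0]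
    exact max_lt hI hunc
  -- existence of a large stable fiber below any splitting node
  have hex : ∀ s ∈ T, s.length < n →
      ∃ g : List I, #{ξ : lam.ord.ToType | s ++ [ξ] ∈ T ∧
        Gaux lam T F (n - s.length - 1) (s ++ [ξ]) = g} = lam := by
    intro s hs hlen
    obtain ⟨g, hg⟩ := pigeon hreg hListI (hT.2 s hs hlen)
      (fun ξ => Gaux lam T F (n - s.length - 1) (s ++ [ξ]))
    exact ⟨g, hg⟩
  have hsucc : ∀ s ∈ T, s.length < n →
      #{ξ : lam.ord.ToType | s ++ [ξ] ∈ T ∧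
        Gaux lam T F (n - s.length - 1) (s ++ [ξ]) =
          (Gaux lam T F (n - s.length) s).tail} = lam := by
    intro s hs hlen
    have hm : n - s.length = (n - s.length - 1) + 1 := by omega
    have hHs : Gaux lam T F (n - s.length) s = F s :: (hex s hs hlen).choose := by
      conv_lhs => rw [hm]
      rw [Gaux, dif_pos (hex s hs hlen)]
    rw [hHs]
    simpa using (hex s hs hlen).choose_spec
  -- the pruned tree
  set R : Set (List lam.ord.ToType) := {s | s ∈ T ∧ ∀ k < s.length,
      Gaux lam T F (n - (k + 1)) (s.take (k + 1)) =
        (Gaux lam T F (n - k) (s.take k)).tail} with hR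
  have hRT : R ⊆ T := fun s hs => hs.1
  have htake : ∀ {s t : List lam.ord.ToType}, t.IsPrefix s → ∀ k ≤ t.length,
      t.take k = s.take k := by
    intro s t hpre k hk
    rw [List.prefix_iff_eq_take] at hpre
    rw [hpre, List.take_take, min_eq_left hk]
  have hRpre : ∀ s ∈ R, ∀ t : List lam.ord.ToType, t.IsPrefix s → t ∈ R := by
    intro s hs t hpre
    refine ⟨hT.1.2.2 s hs.1 t hpre, ?_⟩
    intro k hk
    rw [htake hpre (k + 1) (by omega), htake hpre k (by omega)]
    exact hs.2 k (lt_of_lt_of_le hk hpre.length_le)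
  have hdrop : ∀ s, s ∈ R → Gaux lam T F (n - s.length) s =
      (Gaux lam T F n []).drop s.length := by
    intro s
    induction s using List.reverseRecOn with
    | nil => intro _; simp
    | append_singleton t ξ ih =>
      intro hs
      have ht : t ∈ R := hRpre _ hs t ⟨[ξ], rfl⟩
      have hco := hs.2 t.length (by simp)
      rw [show (t ++ [ξ]).take (t.length + 1) = t ++ [ξ] from
            List.take_of_length_le (by simp), List.take_left] at hco
      have hlen1 : (t ++ [ξ]).length = t.length + 1 := by simp
      rw [hlen1, hco, ih ht, List.tail_drop]
  have hRsplit : ∀ s ∈ R, s.length < n →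
      #{ξ : lam.ord.ToType | s ++ [ξ] ∈ R} = lam := by
    intro s hs hlen
    have key := hsucc s hs.1 hlen
    have heq : {ξ : lam.ord.ToType | s ++ [ξ] ∈ R} =
        {ξ : lam.ord.ToType | s ++ [ξ] ∈ T ∧
          Gaux lam T F (n - s.length - 1) (s ++ [ξ]) =
            (Gaux lam T F (n - s.length) s).tail} := by
      ext ξ
      simp only [Set.mem_setOf_eq]
      constructor
      · intro hξ
        refine ⟨hξ.1, ?_⟩
        have hco := hξ.2 s.length (by simp)
        rw [show (s ++ [ξ]).take (s.length + 1) = s ++ [ξ] from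
              List.take_of_length_le (by simp), List.take_left] at hco
        rw [show n - s.length - 1 = n - (s.length + 1) from by omega]
        exact hco
      · rintro ⟨hξT, hξG⟩
        refine ⟨hξT, ?_⟩
        intro k hk
        rw [List.length_append, List.length_singleton] at hk
        rcases Nat.lt_or_ge k s.length with hk' | hk'
        · rw [List.take_append_of_le_length (by omega),
              List.take_append_of_le_length (by omega)]
          exact hs.2 k hk'
        · have hks : k = s.length := by omega
          subst hks
          rw [show (s ++ [ξ]).take (s.length + 1) = s ++ [ξ] from
                List.take_of_length_le (by simp), List.take_left,
              show n - (s.length + 1) = n - s.length - 1 from by omega]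
          exact hξG
    rw [heq]
    exact key
  refine ⟨R, hRT, ⟨⟨⟨hT.1.1, by intro k hk; simp at hk⟩,
      fun s hs => hT.1.2.1 s (hRT hs), hRpre⟩, hRsplit⟩,
    fun k => ((Gaux lam T F n []).drop k).headI, ?_⟩
  intro s hs
  rw [show F s = (Gaux lam T F (n - s.length) s).headI from (Gaux_headI lam T F _ s).symm,
    hdrop s hs]
end

section
/- Suppose cof(θ) > ω, α is a countable ordinal, and β > α. Let M₀ and M₁ be structures in the empty vocabulary with |M₀| ≥ θ and |M₁| < θ. Then Adam has a winning strategy in DG^β_{θ,α}(M₀,M₁). -/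
open Cardinal Set FirstOrder FirstOrder.Language

universe u

/-- The empty vocabulary (no function and no relation symbols). -/
def emptyLang : FirstOrder.Language.{u, u} :=
  ⟨fun _ => PEmpty, fun _ => PEmpty⟩

noncomputable instance emptyLangStructure (M : Type u) : emptyLang.{u}.Structure M where
  funMap := fun f _ => f.elim
  RelMap := fun r _ => r.elim

namespace DGAdamProof

open DGPaper

variable {M₀ M₁ : Type u} {θ : Cardinal.{u}} {α : Ordinal.{u}}

lemma exists_big_fiber {σ ι : Type u} {θ : Cardinal.{u}} (hcof : Cardinal.aleph0 < θ.ord.cof)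
    (hι : #ι ≤ Cardinal.aleph0) (hS : θ ≤ #σ) (f : σ → ι) : ∃ i, θ ≤ #(f ⁻¹' {i}) := by
  by_contra h
  push_neg at h
  have hθ : Cardinal.aleph0 < θ := hcof.trans_le (Ordinal.cof_ord_le θ)
  have h1 : #σ = Cardinal.sum fun i => #(f ⁻¹' {i}) := by
    rw [← Cardinal.mk_sigma]
    exact Cardinal.mk_congr (Equiv.sigmaFiberEquiv f).symm
  have h2 : Cardinal.sum (fun i => #(f ⁻¹' {i})) < θ := by
    refine (Cardinal.sum_le_mk_mul_iSup _).trans_lt (Cardinal.mul_lt_of_lt hθ.le ?_ ?_)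
    · exact hι.trans_lt hθ
    · exact Ordinal.iSup_lt (hι.trans_lt hcof) h
  exact absurd (hS.trans_eq h1) h2.not_ge

lemma zero_class_small (q : Position emptyLang M₀ M₁ θ α) (hM₁ : #M₁ < θ) :
    #({a | a ∈ q.A0 ∧ q.h0 a = 0} : Set M₀) < θ := by
  have hex : ∀ a : ({a | a ∈ q.A0 ∧ q.h0 a = 0} : Set M₀), ∃ b : M₁, ((a : M₀), b) ∈ q.g :=
    fun a => q.h0_zero a a.2.1 a.2.2
  choose F hF using hex
  have hinj : Function.Injective F := by
    intro a a' h
    apply Subtype.ext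
    exact q.g_iso.2.1 (hF a) (by rw [h]; exact hF a')
  exact (Cardinal.mk_le_of_injective hinj).trans_lt hM₁

/-- Core step: given θ-many elements of `q.A0` whose heights are below a countable
ordinal `δ`, there are θ-many of them sharing a single nonzero height `γ' < δ`. -/
lemma step_core (hcof : Cardinal.aleph0 < θ.ord.cof) (hM₁ : #M₁ < θ)
    (q : Position emptyLang M₀ M₁ θ α)
    (δ : Ordinal.{u}) (hδ : δ.card ≤ Cardinal.aleph0)
    (S : Set M₀) (hSA : S ⊆ q.A0) (hScard : θ ≤ #S) (hSh : ∀ a ∈ S, q.h0 a < δ) :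
    ∃ (γ' : Ordinal.{u}) (S' : Set M₀), γ' ≠ 0 ∧ γ' < δ ∧ S' ⊆ q.A0 ∧ θ ≤ #S' ∧
      ∀ a ∈ S', q.h0 a = γ' := by
  have hθ : Cardinal.aleph0 < θ := hcof.trans_le (Ordinal.cof_ord_le θ)
  set Z : Set M₀ := {a | a ∈ q.A0 ∧ q.h0 a = 0} with hZdef
  have hZ : #Z < θ := zero_class_small q hM₁
  have hS' : θ ≤ #(S \ Z : Set M₀) := by
    by_contra h
    push_neg at h
    exact absurd (hScard.trans (Cardinal.le_mk_diff_add_mk S Z))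
      (Cardinal.add_lt_of_lt hθ.le h hZ).not_ge
  have hlt : ∀ a : (S \ Z : Set M₀), q.h0 a < δ := fun a => hSh a a.2.1
  obtain ⟨i, hi⟩ := exists_big_fiber hcof
    (ι := δ.ToType) (by rw [Cardinal.mk_toType]; exact hδ) hS'
    (fun a => Ordinal.ToType.mk (o := δ) ⟨q.h0 a, hlt a⟩)
  have hθ0 : (0 : Cardinal) < θ := Cardinal.aleph0_pos.trans hθ
  have hne : (((fun a : (S \ Z : Set M₀) =>
      Ordinal.ToType.mk (o := δ) ⟨q.h0 a, hlt a⟩) ⁻¹' {i})).Nonempty := by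
    rw [← Set.nonempty_coe_sort, ← Cardinal.mk_ne_zero_iff]
    exact (hθ0.trans_le hi).ne'
  obtain ⟨a₀, ha₀⟩ := hne
  refine ⟨q.h0 a₀, Subtype.val '' ((fun a : (S \ Z : Set M₀) =>
      Ordinal.ToType.mk (o := δ) ⟨q.h0 a, hlt a⟩) ⁻¹' {i}), ?_, ?_, ?_, ?_, ?_⟩
  · intro h0
    exact a₀.2.2 ⟨hSA a₀.2.1, h0⟩
  · exact hlt a₀
  · rintro a ⟨b, _, rfl⟩
    exact hSA b.2.1
  · rwa [Cardinal.mk_image_eq Subtype.val_injective]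
  · rintro a ⟨b, hb, rfl⟩
    have : Ordinal.ToType.mk (o := δ) ⟨q.h0 b, hlt b⟩
        = Ordinal.ToType.mk (o := δ) ⟨q.h0 a₀, hlt a₀⟩ := by
      rw [Set.mem_preimage, Set.mem_singleton_iff] at hb ha₀
      rw [hb, ha₀]
    have := (Ordinal.ToType.mk (o := δ)).injective this
    exact congrArg Subtype.val this

lemma adam_aux (hcof : Cardinal.aleph0 < θ.ord.cof) (hM₁ : #M₁ < θ) :
    ∀ γ : Ordinal.{u}, ∀ p : Position emptyLang M₀ M₁ θ α,
      γ ≠ 0 → γ < p.ht → γ.card ≤ Cardinal.aleph0 →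
      ∀ S : Set M₀, S ⊆ p.A0 → θ ≤ #S → (∀ a ∈ S, p.h0 a = γ) →
      AdamWinsFrom emptyLang θ α p := by
  intro γ
  induction γ using Ordinal.induction with
  | h γ IH =>
    intro p hγ0 hγht hγcard S hSA hScard hSh
    refine AdamWinsFrom.step p γ hγht ∅ ∅ (by simp) (by simp) ?_
    intro q hq hqht _ _
    have hSA' : S ⊆ q.A0 := fun a ha => hq.2.1 (hSA ha)
    have hlt : ∀ a ∈ S, q.h0 a < γ := by
      intro a ha
      have := (hq.2.2.2.2.2.1 a (hSA ha)).2 (by rw [hSh a ha]; exact hγ0)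
      rwa [hSh a ha] at this
    obtain ⟨γ', S', hγ'0, hγ'lt, hS'A, hS'card, hS'h⟩ :=
      step_core hcof hM₁ q γ hγcard S hSA' hScard hlt
    exact IH γ' hγ'lt q hγ'0 (hγ'lt.trans_eq hqht.symm)
      ((Ordinal.card_le_card hγ'lt.le).trans hγcard) S' hS'A hS'card hS'h

end DGAdamProof

open DGPaper in
/-- Proposition `size`.  Suppose `cof(θ) > ω`, `α` is a countable
ordinal and `β > α`.  Let `M₀` and `M₁` be structures in the empty vocabulary with
`|M₀| ≥ θ` and `|M₁| < θ`.  Then Adam has a winning strategy in `DG^β_{θ,α}(M₀,M₁)`. -/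
theorem adam_wins_of_card_gap (M₀ M₁ : Type u)
    (θ : Cardinal.{u}) (α β : Ordinal.{u})
    (hcof : Cardinal.aleph0 < θ.ord.cof)
    (hα : α.card ≤ Cardinal.aleph0)
    (hβ : α < β)
    (hM₀ : θ ≤ #M₀) (hM₁ : #M₁ < θ) :
    AdamWinsGame emptyLang.{u} M₀ M₁ β θ α := by
  obtain ⟨S, hS⟩ : ∃ S : Set M₀, #S = θ := Cardinal.le_mk_iff_exists_set.mp hM₀
  refine AdamWinsFrom.step _ α hβ S ∅ hS.le (by simp) ?_
  intro q _ hqht hS0 _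
  have hlt : ∀ a ∈ S, q.h0 a < α := fun a ha => q.h0_lt a (hS0 ha)
  obtain ⟨γ', S', hγ'0, hγ'lt, hS'A, hS'card, hS'h⟩ :=
    DGAdamProof.step_core hcof hM₁ q α hα S hS0 hS.ge hlt
  exact DGAdamProof.adam_aux hcof hM₁ γ' q hγ'0 (hγ'lt.trans_eq hqht.symm)
    ((Ordinal.card_le_card hγ'lt.le).trans hα) S' hS'A hS'card hS'h
end

section
/- Let θ be an infinite cardinal, β an ordinal, and M a structure in a vocabulary τ of cardinality ≤ θ. Then there is a substructure N of M of cardinality at most ℶ_{β+1}(θ) such that M ≡^β_θ N (M and N are θ-back-and-forth equivalent up to β). -/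
open Cardinal Set FirstOrder FirstOrder.Language

universe u

namespace DGPaper

variable (L : FirstOrder.Language.{u, u})

/-- The Karp back-and-forth hierarchy `ℐ^γ_θ(M, N)` of families of partial isomorphisms:
`ℐ⁰` consists of all partial isomorphisms of size `≤ θ`, and `f ∈ ℐ^γ` iff `f` is a
partial isomorphism of size `≤ θ` such that for all `γ' < γ`, every set of size `≤ θ` on
either side can be covered by some extension of `f` lying in `ℐ^{γ'}`. -/
noncomputable def BF (M N : Type u) [L.Structure M] [L.Structure N] (θ : Cardinal.{u}) :
    Ordinal.{u} → Set (Set (M × N)) :=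
  WellFounded.fix (C := fun _ : Ordinal.{u} => Set (Set (M × N))) Ordinal.lt_wf
    fun γ IH =>
      {g | IsPartialIso L M N g ∧ #g ≤ θ ∧
        ∀ γ' (h : γ' < γ),
          (∀ A : Set M, #A ≤ θ →
            ∃ g', g' ∈ IH γ' h ∧ g ⊆ g' ∧ A ⊆ Prod.fst '' g') ∧
          (∀ B : Set N, #B ≤ θ →
            ∃ g', g' ∈ IH γ' h ∧ g ⊆ g' ∧ B ⊆ Prod.snd '' g')}

/-- `M ≡^γ_θ N`: the structures `M` and `N` are `θ`-back-and-forth equivalent up to `γ`,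
i.e. `ℐ^γ_θ(M, N)` is nonempty. -/
noncomputable def BFEquiv (M N : Type u) [L.Structure M] [L.Structure N]
    (θ : Cardinal.{u}) (γ : Ordinal.{u}) : Prop :=
  (BF L M N θ γ).Nonempty

/-- The beth function starting at `θ`: `ℶ_0(θ) = θ`, `ℶ_{ξ+1}(θ) = 2^{ℶ_ξ(θ)}`, and
suprema at limits. -/
noncomputable def bethAt (θ : Cardinal.{u}) (o : Ordinal.{u}) : Cardinal.{u} :=
  Ordinal.limitRecOn o θ (fun _ ih => 2 ^ ih) (fun o _ ih => ⨆ i : Set.Iio o, ih i.1 i.2)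

end DGPaper

namespace DGPaper
open Order

variable {θ : Cardinal.{u}}

@[simp] theorem bethAt_zero : bethAt θ 0 = θ := Ordinal.limitRecOn_zero _ _ _

@[simp] theorem bethAt_succ (o : Ordinal.{u}) : bethAt θ (succ o) = 2 ^ bethAt θ o :=
  Ordinal.limitRecOn_succ _ _ _ _

theorem bethAt_limit {o : Ordinal.{u}} (ho : Order.IsSuccLimit o) :
    bethAt θ o = ⨆ i : Iio o, bethAt θ i.1 := Ordinal.limitRecOn_limit _ _ _ _ ho

theorem bethAt_strictMono : StrictMono (bethAt θ) := by
  intro a b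
  induction' b using Ordinal.induction with b IH generalizing a
  intro h
  rcases Ordinal.zero_or_succ_or_isSuccLimit b with (rfl | ⟨c, rfl⟩ | hb)
  · exact ((zero_le : (0 : Ordinal) ≤ a).not_gt h).elim
  · rw [Order.lt_succ_iff] at h
    rw [bethAt_succ]
    apply lt_of_le_of_lt _ (cantor _)
    rcases eq_or_lt_of_le h with (rfl | h)
    · rfl
    exact (IH c (Order.lt_succ c) h).le
  · apply (cantor _).trans_le
    rw [bethAt_limit hb, ← bethAt_succ]
    exact le_ciSup bddAbove_of_small (⟨_, hb.succ_lt h⟩ : Iio b)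

theorem bethAt_mono : Monotone (bethAt θ) := bethAt_strictMono.monotone

theorem le_bethAt (o : Ordinal.{u}) : θ ≤ bethAt θ o := by
  simpa using bethAt_mono (zero_le : (0 : Ordinal) ≤ o)

theorem aleph0_le_bethAt (hθ : ℵ₀ ≤ θ) (o : Ordinal.{u}) : ℵ₀ ≤ bethAt θ o :=
  hθ.trans (le_bethAt o)

theorem isNormal_bethAt : Order.IsNormal (ord ∘ bethAt θ) := by
  refine Order.isNormal_iff.2
    ⟨ord_strictMono.comp bethAt_strictMono, fun o ho a ha ↦ ?_⟩
  rw [Function.comp_apply, bethAt_limit ho, ord_le]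
  exact ciSup_le' fun b => ord_le.1 (ha _ b.2)

theorem card_le_bethAt (o : Ordinal.{u}) : o.card ≤ bethAt θ o := by
  have h : o ≤ (bethAt θ o).ord := isNormal_bethAt.strictMono.le_apply (x := o)
  simpa using Ordinal.card_le_card h

end DGPaper
namespace DGPaper
open Order

section Equiv

variable {L : FirstOrder.Language.{u, u}} {M : Type u} [L.Structure M] {S : Type u}

/-- The graph of the positional pairing of two tuples. -/
def pairGraph (s t : S → M) : Set (M × M) := Set.range fun i => (s i, t i)

theorem mem_pairGraph_iff {s t : S → M} {p : M × M} :
    p ∈ pairGraph s t ↔ ∃ i, s i = p.1 ∧ t i = p.2 := by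
  constructor
  · rintro ⟨i, rfl⟩; exact ⟨i, rfl, rfl⟩
  · rintro ⟨i, h1, h2⟩; exact ⟨i, by simp [h1, h2, Prod.ext_iff]⟩

theorem isPartialIso_pairGraph_refl (L : FirstOrder.Language.{u,u}) (M : Type u)
    [L.Structure M] (s : S → M) : IsPartialIso L M M (pairGraph s s) := by
  have hdiag : ∀ p : M × M, p ∈ pairGraph s s → p.1 = p.2 := by
    rintro p ⟨i, rfl⟩; rfl
  refine ⟨?_, ?_, ?_, ?_⟩
  · intro a b b' hb hb'
    have e1 := hdiag _ hb
    have e2 := hdiag _ hb'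
    simp only at e1 e2
    rw [← e1, ← e2]
  · intro a a' b ha ha'
    have e1 := hdiag _ ha
    have e2 := hdiag _ ha'
    simp only at e1 e2
    rw [e1, e2]
  · intro n R x y hxy
    have : x = y := funext fun i => hdiag _ (hxy i)
    rw [this]
  · intro n f x y hxy
    have hxy' : x = y := funext fun i => hdiag _ (hxy i)
    subst hxy'
    exact ⟨fun b hb => ((hdiag _ hb).symm : _), fun a ha => (hdiag _ ha : _)⟩

theorem isPartialIso_pairGraph_symm {L : FirstOrder.Language.{u,u}} {M : Type u}
    [L.Structure M] {s t : S → M} (h : IsPartialIso L M M (pairGraph s t)) :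
    IsPartialIso L M M (pairGraph t s) := by
  obtain ⟨h1, h2, h3, h4⟩ := h
  have hsw : ∀ a b : M, (a, b) ∈ pairGraph t s → (b, a) ∈ pairGraph s t := by
    rintro a b ⟨i, hi⟩
    exact ⟨i, by simp_all [Prod.ext_iff]⟩
  refine ⟨?_, ?_, ?_, ?_⟩
  · intro a b b' hb hb'
    exact h2 (hsw _ _ hb) (hsw _ _ hb')
  · intro a a' b ha ha'
    exact h1 (hsw _ _ ha) (hsw _ _ ha')
  · intro n R x y hxy
    exact (h3 n R y x fun i => hsw _ _ (hxy i)).symm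
  · intro n f x y hxy
    have h4' := h4 n f y x fun i => hsw _ _ (hxy i)
    exact ⟨fun b hb => h4'.2 b (hsw _ _ hb), fun a ha => h4'.1 a (hsw _ _ ha)⟩

theorem isPartialIso_pairGraph_trans {L : FirstOrder.Language.{u,u}} {M : Type u}
    [L.Structure M] {s t u : S → M} (hst : IsPartialIso L M M (pairGraph s t))
    (htu : IsPartialIso L M M (pairGraph t u)) :
    IsPartialIso L M M (pairGraph s u) := by
  obtain ⟨a1, a2, a3, a4⟩ := hst
  obtain ⟨b1, b2, b3, b4⟩ := htu
  refine ⟨?_, ?_, ?_, ?_⟩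
  · rintro a b b' ⟨i, hi⟩ ⟨j, hj⟩
    obtain ⟨hi1, hi2⟩ := Prod.ext_iff.1 hi
    obtain ⟨hj1, hj2⟩ := Prod.ext_iff.1 hj
    dsimp at hi1 hi2 hj1 hj2
    -- s i = a = s j, b = u i, b' = u j
    have hti : t i = t j := a1 (⟨i, rfl⟩ : (s i, t i) ∈ pairGraph s t)
      (by rw [hi1, ← hj1]; exact ⟨j, rfl⟩)
    have : u i = u j := b1 (⟨i, rfl⟩ : (t i, u i) ∈ pairGraph t u)
      (by rw [hti]; exact ⟨j, rfl⟩)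
    rw [← hi2, ← hj2, this]
  · rintro a a' b ⟨i, hi⟩ ⟨j, hj⟩
    obtain ⟨hi1, hi2⟩ := Prod.ext_iff.1 hi
    obtain ⟨hj1, hj2⟩ := Prod.ext_iff.1 hj
    dsimp at hi1 hi2 hj1 hj2
    have hti : t i = t j := b2 (⟨i, rfl⟩ : (t i, u i) ∈ pairGraph t u)
      (by rw [hi2, ← hj2]; exact ⟨j, rfl⟩)
    have : s i = s j := a2 (⟨i, rfl⟩ : (s i, t i) ∈ pairGraph s t)
      (by rw [hti]; exact ⟨j, rfl⟩)
    rw [← hi1, ← hj1, this]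
  · intro n R x y hxy
    choose i hi using hxy
    have hx : x = fun k => s (i k) := funext fun k => ((Prod.ext_iff.1 (hi k).symm).1 : _)
    have hy : y = fun k => u (i k) := funext fun k => ((Prod.ext_iff.1 (hi k).symm).2 : _)
    rw [hx, hy]
    exact (a3 n R _ (fun k => t (i k)) fun k => ⟨i k, rfl⟩).trans
      (b3 n R _ _ fun k => ⟨i k, rfl⟩)
  · intro n f x y hxy
    choose i hi using hxy
    have hx : x = fun k => s (i k) := funext fun k => ((Prod.ext_iff.1 (hi k).symm).1 : _)
    have hy : y = fun k => u (i k) := funext fun k => ((Prod.ext_iff.1 (hi k).symm).2 : _)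
    subst hx; subst hy
    constructor
    · rintro b ⟨j, hj⟩
      obtain ⟨hj1, hj2⟩ := Prod.ext_iff.1 hj
      dsimp at hj1 hj2
      -- s j = funMap f (s ∘ i), b = u j
      have h1 : t j = Structure.funMap f (fun k => t (i k)) :=
        (a4 n f _ (fun k => t (i k)) fun k => ⟨i k, rfl⟩).1 (t j) (by rw [← hj1]; exact ⟨j, rfl⟩)
      have h2 : u j = Structure.funMap f (fun k => u (i k)) :=
        (b4 n f (fun k => t (i k)) _ fun k => ⟨i k, rfl⟩).1 (u j) (by rw [← h1]; exact ⟨j, rfl⟩)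
      rw [← hj2, h2]
    · rintro a ⟨j, hj⟩
      obtain ⟨hj1, hj2⟩ := Prod.ext_iff.1 hj
      dsimp at hj1 hj2
      -- u j = funMap f (u ∘ i), a = s j
      have h1 : t j = Structure.funMap f (fun k => t (i k)) :=
        (b4 n f (fun k => t (i k)) (fun k => u (i k)) fun k => ⟨i k, rfl⟩).2 (t j)
          (by rw [← hj2]; exact ⟨j, rfl⟩)
      have h2 : s j = Structure.funMap f (fun k => s (i k)) :=
        (a4 n f (fun k => s (i k)) (fun k => t (i k)) fun k => ⟨i k, rfl⟩).2 (s j)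
          (by rw [← h1]; exact ⟨j, rfl⟩)
      rw [← hj1, h2]

end Equiv

end DGPaper
namespace DGPaper
open Order

section Equiv2

variable {L : FirstOrder.Language.{u, u}} {M : Type u} [L.Structure M] {S : Type u}

variable (L M) in
/-- The `γ`-back-and-forth equivalence on `S`-tuples of `M`, relative to a splitting
`E : S ≃ S ⊕ S`; extensions of a tuple `s` are tuples `s'` with `s' ∘ E.symm ∘ Sum.inl = s`. -/
noncomputable def equivAt (E : S ≃ S ⊕ S) : Ordinal.{u} → (S → M) → (S → M) → Prop :=
  WellFounded.fix (C := fun _ : Ordinal.{u} => (S → M) → (S → M) → Prop) Ordinal.lt_wf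
    fun γ IH s t =>
      IsPartialIso L M M (pairGraph s t) ∧
      ∀ γ' (h : γ' < γ),
        (∀ s' : S → M, s' ∘ (E.symm ∘ Sum.inl) = s →
          ∃ t' : S → M, t' ∘ (E.symm ∘ Sum.inl) = t ∧ IH γ' h s' t') ∧
        (∀ t' : S → M, t' ∘ (E.symm ∘ Sum.inl) = t →
          ∃ s' : S → M, s' ∘ (E.symm ∘ Sum.inl) = s ∧ IH γ' h s' t')

theorem equivAt_iff (E : S ≃ S ⊕ S) (γ : Ordinal.{u}) (s t : S → M) :
    equivAt L M E γ s t ↔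
      IsPartialIso L M M (pairGraph s t) ∧
      ∀ γ' < γ,
        (∀ s' : S → M, s' ∘ (E.symm ∘ Sum.inl) = s →
          ∃ t' : S → M, t' ∘ (E.symm ∘ Sum.inl) = t ∧ equivAt L M E γ' s' t') ∧
        (∀ t' : S → M, t' ∘ (E.symm ∘ Sum.inl) = t →
          ∃ s' : S → M, s' ∘ (E.symm ∘ Sum.inl) = s ∧ equivAt L M E γ' s' t') := by
  have h := WellFounded.fix_eq (C := fun _ : Ordinal.{u} => (S → M) → (S → M) → Prop)
    Ordinal.lt_wf (fun γ IH s t =>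
      IsPartialIso L M M (pairGraph s t) ∧
      ∀ γ' (h : γ' < γ),
        (∀ s' : S → M, s' ∘ (E.symm ∘ Sum.inl) = s →
          ∃ t' : S → M, t' ∘ (E.symm ∘ Sum.inl) = t ∧ IH γ' h s' t') ∧
        (∀ t' : S → M, t' ∘ (E.symm ∘ Sum.inl) = t →
          ∃ s' : S → M, s' ∘ (E.symm ∘ Sum.inl) = s ∧ IH γ' h s' t')) γ
  exact iff_of_eq (congrFun (congrFun h s) t)

variable {E : S ≃ S ⊕ S}

theorem equivAt_isPartialIso {γ : Ordinal.{u}} {s t : S → M} (h : equivAt L M E γ s t) :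
    IsPartialIso L M M (pairGraph s t) := ((equivAt_iff E γ s t).1 h).1

theorem equivAt_refl (γ : Ordinal.{u}) (s : S → M) : equivAt L M E γ s s := by
  induction' γ using Ordinal.induction with γ IH generalizing s
  rw [equivAt_iff]
  refine ⟨isPartialIso_pairGraph_refl L M s, fun γ' hγ' => ⟨?_, ?_⟩⟩
  · exact fun s' hs' => ⟨s', hs', IH γ' hγ' s'⟩
  · exact fun t' ht' => ⟨t', ht', IH γ' hγ' t'⟩

theorem equivAt_symm {γ : Ordinal.{u}} {s t : S → M} (h : equivAt L M E γ s t) :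
    equivAt L M E γ t s := by
  induction' γ using Ordinal.induction with γ IH generalizing s t
  rw [equivAt_iff] at h ⊢
  obtain ⟨h1, h2⟩ := h
  refine ⟨isPartialIso_pairGraph_symm h1, fun γ' hγ' => ⟨?_, ?_⟩⟩
  · intro t' ht'
    obtain ⟨s', hs', he⟩ := (h2 γ' hγ').2 t' ht'
    exact ⟨s', hs', IH γ' hγ' he⟩
  · intro s' hs'
    obtain ⟨t', ht', he⟩ := (h2 γ' hγ').1 s' hs'
    exact ⟨t', ht', IH γ' hγ' he⟩

theorem equivAt_trans {γ : Ordinal.{u}} {s t u : S → M} (hst : equivAt L M E γ s t)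
    (htu : equivAt L M E γ t u) : equivAt L M E γ s u := by
  induction' γ using Ordinal.induction with γ IH generalizing s t u
  rw [equivAt_iff] at hst htu ⊢
  obtain ⟨a1, a2⟩ := hst
  obtain ⟨b1, b2⟩ := htu
  refine ⟨isPartialIso_pairGraph_trans a1 b1, fun γ' hγ' => ⟨?_, ?_⟩⟩
  · intro s' hs'
    obtain ⟨t', ht', he1⟩ := (a2 γ' hγ').1 s' hs'
    obtain ⟨u', hu', he2⟩ := (b2 γ' hγ').1 t' ht'
    exact ⟨u', hu', IH γ' hγ' he1 he2⟩
  · intro u' hu'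
    obtain ⟨t', ht', he2⟩ := (b2 γ' hγ').2 u' hu'
    obtain ⟨s', hs', he1⟩ := (a2 γ' hγ').2 t' ht'
    exact ⟨s', hs', IH γ' hγ' he1 he2⟩

variable (L M E) in
/-- The setoid of `γ`-equivalence of tuples. -/
noncomputable def setoidAt (γ : Ordinal.{u}) : Setoid (S → M) :=
  ⟨equivAt L M E γ, ⟨equivAt_refl γ, equivAt_symm, equivAt_trans⟩⟩

/-- Any tuple can be extended (relative to the splitting `E`) so as to cover a set of
size at most the size of `S`, adding only elements of that set to the range. -/
theorem extendCover (s : S → M) (A : Set M) (hA : #A ≤ #S) [Nonempty S] :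
    ∃ s' : S → M, s' ∘ (E.symm ∘ Sum.inl) = s ∧ A ⊆ Set.range s' ∧
      Set.range s' ⊆ Set.range s ∪ A := by
  have i0 : S := Classical.arbitrary S
  obtain ⟨g⟩ : Nonempty (A ↪ S) := Cardinal.le_def _ _ |>.1 hA
  classical
  set f : S → M := fun i => if h : ∃ a : A, g a = i then (h.choose : M) else s i0 with hf
  have hAf : A ⊆ Set.range f := by
    intro a ha
    refine ⟨g ⟨a, ha⟩, ?_⟩
    have h : ∃ b : A, g b = g ⟨a, ha⟩ := ⟨⟨a, ha⟩, rfl⟩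
    simp only [hf, dif_pos h]
    have := g.injective h.choose_spec
    rw [this]
  have hfr : Set.range f ⊆ Set.range s ∪ A := by
    rintro x ⟨i, rfl⟩
    by_cases h : ∃ a : A, g a = i
    · simp only [hf, dif_pos h]
      exact Or.inr h.choose.2
    · simp only [hf, dif_neg h]
      exact Or.inl ⟨i0, rfl⟩
  refine ⟨Sum.elim s f ∘ E, ?_, ?_, ?_⟩
  · funext i
    simp
  · intro a ha
    obtain ⟨i, hi⟩ := hAf ha
    exact ⟨E.symm (Sum.inr i), by simp [hi]⟩
  · rintro x ⟨i, rfl⟩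
    rcases h : E i with j | j
    · simp only [Function.comp_apply, h, Sum.elim_inl]
      exact Or.inl ⟨j, rfl⟩
    · simp only [Function.comp_apply, h, Sum.elim_inr]
      rcases hfr ⟨j, rfl⟩ with h' | h'
      · exact Or.inl h'
      · exact Or.inr h'

end Equiv2

end DGPaper
namespace DGPaper
open Order

section Counting

variable {L : FirstOrder.Language.{u, u}} {M : Type u} [L.Structure M] {S : Type u}
variable (L M)

/-- The quantifier-free type of a tuple. -/
def qftp (s : S → M) :
    Set (S × S) × Set (Σ n, L.Relations (n + 1) × (Fin (n + 1) → S)) ×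
      Set ((Σ n, L.Functions n × (Fin n → S)) × S) :=
  ({p | s p.1 = s p.2}, {x | Structure.RelMap x.2.1 (s ∘ x.2.2)},
    {x | Structure.funMap x.1.2.1 (s ∘ x.1.2.2) = s x.2})

variable {L M}

theorem qftp_eq_iff {s t : S → M} :
    qftp L M s = qftp L M t ↔ IsPartialIso L M M (pairGraph s t) := by
  constructor
  · intro h
    have e1 := congrArg Prod.fst h
    have e23 := congrArg Prod.snd h
    have e2 := congrArg Prod.fst e23
    have e3 := congrArg Prod.snd e23
    simp only [qftp] at e1 e2 e3
    have E1 : ∀ i j : S, s i = s j ↔ t i = t j := fun i j =>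
      ⟨fun hh => by have := Set.ext_iff.1 e1 (i, j); exact this.1 hh,
       fun hh => by have := Set.ext_iff.1 e1 (i, j); exact this.2 hh⟩
    have E2 : ∀ (n) (R : L.Relations (n+1)) (v : Fin (n+1) → S),
        Structure.RelMap R (s ∘ v) ↔ Structure.RelMap R (t ∘ v) := fun n R v =>
      Set.ext_iff.1 e2 ⟨n, R, v⟩
    have E3 : ∀ (n) (f : L.Functions n) (v : Fin n → S) (j : S),
        Structure.funMap f (s ∘ v) = s j ↔ Structure.funMap f (t ∘ v) = t j := fun n f v j =>
      Set.ext_iff.1 e3 ⟨⟨n, f, v⟩, j⟩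
    refine ⟨?_, ?_, ?_, ?_⟩
    · rintro a b b' ⟨i, hi⟩ ⟨j, hj⟩
      obtain ⟨hi1, hi2⟩ := Prod.ext_iff.1 hi
      obtain ⟨hj1, hj2⟩ := Prod.ext_iff.1 hj
      simp only at hi1 hi2 hj1 hj2
      rw [← hi2, ← hj2]
      exact (E1 i j).1 (by rw [hi1, hj1])
    · rintro a a' b ⟨i, hi⟩ ⟨j, hj⟩
      obtain ⟨hi1, hi2⟩ := Prod.ext_iff.1 hi
      obtain ⟨hj1, hj2⟩ := Prod.ext_iff.1 hj
      simp only at hi1 hi2 hj1 hj2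
      rw [← hi1, ← hj1]
      exact (E1 i j).2 (by rw [hi2, hj2])
    · intro n R x y hxy
      choose i hi using hxy
      have hx : x = s ∘ i := funext fun k => ((Prod.ext_iff.1 (hi k).symm).1 : _)
      have hy : y = t ∘ i := funext fun k => ((Prod.ext_iff.1 (hi k).symm).2 : _)
      rw [hx, hy]
      exact E2 n R i
    · intro n f x y hxy
      choose i hi using hxy
      have hx : x = s ∘ i := funext fun k => ((Prod.ext_iff.1 (hi k).symm).1 : _)
      have hy : y = t ∘ i := funext fun k => ((Prod.ext_iff.1 (hi k).symm).2 : _)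
      subst hx; subst hy
      constructor
      · rintro b ⟨j, hj⟩
        obtain ⟨hj1, hj2⟩ := Prod.ext_iff.1 hj
        simp only at hj1 hj2
        rw [← hj2]
        exact ((E3 n f i j).1 hj1.symm).symm
      · rintro a ⟨j, hj⟩
        obtain ⟨hj1, hj2⟩ := Prod.ext_iff.1 hj
        simp only at hj1 hj2
        rw [← hj1]
        exact ((E3 n f i j).2 hj2.symm).symm
  · rintro ⟨h1, h2, h3, h4⟩
    refine Prod.ext ?_ (Prod.ext ?_ ?_)
    · ext ⟨i, j⟩
      simp only [qftp, Set.mem_setOf_eq]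
      constructor
      · intro hh
        exact h1 (⟨i, rfl⟩ : (s i, t i) ∈ pairGraph s t) (by rw [hh]; exact ⟨j, rfl⟩)
      · intro hh
        exact h2 (⟨i, rfl⟩ : (s i, t i) ∈ pairGraph s t) (by rw [hh]; exact ⟨j, rfl⟩)
    · ext ⟨n, R, v⟩
      simp only [qftp, Set.mem_setOf_eq]
      exact h3 n R (s ∘ v) (t ∘ v) fun k => ⟨v k, rfl⟩
    · ext ⟨⟨n, f, v⟩, j⟩
      simp only [qftp, Set.mem_setOf_eq]
      constructor
      · intro hh
        have := (h4 n f (s ∘ v) (t ∘ v) fun k => ⟨v k, rfl⟩).1 (t j)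
          (by rw [hh]; exact ⟨j, rfl⟩)
        exact this.symm
      · intro hh
        have := (h4 n f (s ∘ v) (t ∘ v) fun k => ⟨v k, rfl⟩).2 (s j)
          (by rw [hh]; exact ⟨j, rfl⟩)
        exact this.symm

variable {θ : Cardinal.{u}} {E : S ≃ S ⊕ S}

theorem equivAt_zero_iff {s t : S → M} :
    equivAt L M E 0 s t ↔ IsPartialIso L M M (pairGraph s t) := by
  rw [equivAt_iff]
  exact ⟨fun h => h.1, fun h => ⟨h, fun γ' h' => absurd h' (zero_le : (0 : Ordinal) ≤ γ').not_gt⟩⟩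

theorem mk_quotient_zero_le (hθ : ℵ₀ ≤ θ) (hL : L.card ≤ θ) (hS : #S = θ) :
    #(Quotient (setoidAt L M E 0)) ≤ 2 ^ θ := by
  have hwd : ∀ s t : S → M, equivAt L M E 0 s t → qftp L M s = qftp L M t := fun s t h =>
    qftp_eq_iff.2 (equivAt_zero_iff.1 h)
  have hinj : Function.Injective (Quotient.lift (s := setoidAt L M E 0) (qftp L M) hwd) := by
    intro x y
    induction' x using Quotient.ind with s
    induction' y using Quotient.ind with t
    intro h
    exact Quotient.sound (equivAt_zero_iff.2 (qftp_eq_iff.1 h))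
  refine (Cardinal.mk_le_of_injective hinj).trans ?_
  have hRel : ∀ n : ℕ, #(L.Relations n) ≤ θ := fun n =>
    le_trans (Cardinal.mk_le_of_injective (f := fun R => (Sum.inr ⟨n, R⟩ : L.Symbols))
      (fun a b h => by simpa using h)) hL
  have hFun : ∀ n : ℕ, #(L.Functions n) ≤ θ := fun n =>
    le_trans (Cardinal.mk_le_of_injective (f := fun f => (Sum.inl ⟨n, f⟩ : L.Symbols))
      (fun a b h => by simpa using h)) hL
  have hfin : ∀ n : ℕ, #(Fin n → S) ≤ θ := by
    intro n
    rw [Cardinal.mk_arrow]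
    simp only [Cardinal.lift_id, Cardinal.lift_id', Cardinal.mk_fin, Cardinal.lift_natCast, hS]
    exact le_trans Cardinal.power_nat_le_max (max_le le_rfl hθ)
  have c1 : #(Set (S × S)) ≤ 2 ^ θ := by
    rw [Cardinal.mk_set]
    refine Cardinal.power_le_power_left two_ne_zero ?_
    simp only [Cardinal.mk_prod, Cardinal.lift_id, Cardinal.lift_id', hS]
    exact le_of_eq (Cardinal.mul_eq_self hθ)
  have c2 : #(Set (Σ n, L.Relations (n + 1) × (Fin (n + 1) → S))) ≤ 2 ^ θ := by
    rw [Cardinal.mk_set]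
    refine Cardinal.power_le_power_left two_ne_zero ?_
    rw [Cardinal.mk_sigma]
    refine le_trans (Cardinal.sum_le_sum _ (fun _ => θ) ?_) ?_
    · intro n
      simp only [Cardinal.mk_prod, Cardinal.lift_id, Cardinal.lift_id']
      calc #(L.Relations (n+1)) * #(Fin (n+1) → S) ≤ θ * θ :=
            mul_le_mul' (hRel _) (hfin _)
        _ = θ := Cardinal.mul_eq_self hθ
    · rw [Cardinal.sum_const]
      simp only [Cardinal.mk_denumerable, Cardinal.lift_aleph0, Cardinal.lift_id, Cardinal.lift_id']
      exact le_of_eq (Cardinal.aleph0_mul_eq hθ)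
  have c3 : #(Set ((Σ n, L.Functions n × (Fin n → S)) × S)) ≤ 2 ^ θ := by
    rw [Cardinal.mk_set]
    refine Cardinal.power_le_power_left two_ne_zero ?_
    simp only [Cardinal.mk_prod, Cardinal.lift_id, Cardinal.lift_id', hS]
    have : #(Σ n, L.Functions n × (Fin n → S)) ≤ θ := by
      rw [Cardinal.mk_sigma]
      refine le_trans (Cardinal.sum_le_sum _ (fun _ => θ) ?_) ?_
      · intro n
        simp only [Cardinal.mk_prod, Cardinal.lift_id, Cardinal.lift_id']
        calc #(L.Functions n) * #(Fin n → S) ≤ θ * θ := mul_le_mul' (hFun _) (hfin _)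
          _ = θ := Cardinal.mul_eq_self hθ
      · rw [Cardinal.sum_const]
        simp only [Cardinal.mk_denumerable, Cardinal.lift_aleph0, Cardinal.lift_id, Cardinal.lift_id']
        exact le_of_eq (Cardinal.aleph0_mul_eq hθ)
    calc #(Σ n, L.Functions n × (Fin n → S)) * θ ≤ θ * θ := mul_le_mul' this le_rfl
      _ = θ := Cardinal.mul_eq_self hθ
  calc #(Set (S × S) × Set (Σ n, L.Relations (n + 1) × (Fin (n + 1) → S)) ×
        Set ((Σ n, L.Functions n × (Fin n → S)) × S))
      = #(Set (S × S)) * (#(Set (Σ n, L.Relations (n + 1) × (Fin (n + 1) → S))) *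
          #(Set ((Σ n, L.Functions n × (Fin n → S)) × S))) := by
        simp only [Cardinal.mk_prod, Cardinal.lift_id, Cardinal.lift_id']
    _ ≤ 2 ^ θ * (2 ^ θ * 2 ^ θ) := by
        exact mul_le_mul' c1 (mul_le_mul' c2 c3)
    _ = 2 ^ θ := by
        rw [← Cardinal.power_add, ← Cardinal.power_add,
          Cardinal.add_eq_right hθ le_rfl, Cardinal.add_eq_right hθ le_rfl]

end Counting

end DGPaper
namespace DGPaper
open Order

section Counting2

variable {L : FirstOrder.Language.{u, u}} {M : Type u} [L.Structure M] {S : Type u}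
variable {θ : Cardinal.{u}} {E : S ≃ S ⊕ S}

theorem mk_quotient_le (hθ : ℵ₀ ≤ θ) (hL : L.card ≤ θ) (hS : #S = θ) (γ : Ordinal.{u}) :
    #(Quotient (setoidAt L M E γ)) ≤ bethAt θ (succ γ) := by
  induction' γ using Ordinal.induction with γ IH
  set oi : γ.ToType → Ordinal.{u} :=
    fun j => ((((Ordinal.ToType.mk (o := γ))).symm j : Set.Iio γ) : Ordinal.{u}) with hoi_def
  have hoi : ∀ j, oi j < γ := fun j => (((Ordinal.ToType.mk (o := γ))).symm j).2
  have hsur : ∀ γ' < γ, ∃ j, oi j = γ' := fun γ' h =>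
    ⟨(Ordinal.ToType.mk (o := γ)) ⟨γ', h⟩, by simp only [hoi_def, OrderIso.symm_apply_apply]⟩
  classical
  set F : (S → M) → Quotient (setoidAt L M E 0) ×
      Set (Σ j : γ.ToType, Quotient (setoidAt L M E (oi j))) := fun s =>
    (Quotient.mk (setoidAt L M E 0) s,
      {p | ∃ s' : S → M, s' ∘ (E.symm ∘ Sum.inl) = s ∧
            Quotient.mk (setoidAt L M E (oi p.1)) s' = p.2}) with hF_def
  have hwd : ∀ s t : S → M, equivAt L M E γ s t → F s = F t := by
    intro s t h
    have hit := (equivAt_iff E γ s t).1 h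
    refine Prod.ext ?_ ?_
    · exact Quotient.sound (equivAt_zero_iff.2 hit.1)
    · ext ⟨j, q⟩
      simp only [hF_def, Set.mem_setOf_eq]
      constructor
      · rintro ⟨s', hs', hq⟩
        obtain ⟨t', ht', he⟩ := (hit.2 (oi j) (hoi j)).1 s' hs'
        exact ⟨t', ht', by rw [← hq]; exact Quotient.sound (equivAt_symm he)⟩
      · rintro ⟨t', ht', hq⟩
        obtain ⟨s', hs', he⟩ := (hit.2 (oi j) (hoi j)).2 t' ht'
        exact ⟨s', hs', by rw [← hq]; exact Quotient.sound he⟩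
  have hinj2 : ∀ s t : S → M, F s = F t → equivAt L M E γ s t := by
    intro s t h
    have h1 := congrArg Prod.fst h
    have h2 := congrArg Prod.snd h
    simp only [hF_def] at h1 h2
    rw [equivAt_iff]
    refine ⟨equivAt_zero_iff.1 (Quotient.exact h1), fun γ' hγ' => ?_⟩
    obtain ⟨j, rfl⟩ := hsur γ' hγ'
    constructor
    · intro s' hs'
      have hmem : (⟨j, Quotient.mk (setoidAt L M E (oi j)) s'⟩ :
          Σ j : γ.ToType, Quotient (setoidAt L M E (oi j))) ∈
          {p : Σ j : γ.ToType, Quotient (setoidAt L M E (oi j)) |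
            ∃ s'' : S → M, s'' ∘ (E.symm ∘ Sum.inl) = s ∧
              Quotient.mk (setoidAt L M E (oi p.1)) s'' = p.2} := ⟨s', hs', rfl⟩
      rw [h2] at hmem
      obtain ⟨t', ht', hq⟩ := hmem
      exact ⟨t', ht', equivAt_symm (Quotient.exact hq)⟩
    · intro t' ht'
      have hmem : (⟨j, Quotient.mk (setoidAt L M E (oi j)) t'⟩ :
          Σ j : γ.ToType, Quotient (setoidAt L M E (oi j))) ∈
          {p : Σ j : γ.ToType, Quotient (setoidAt L M E (oi j)) |
            ∃ s'' : S → M, s'' ∘ (E.symm ∘ Sum.inl) = t ∧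
              Quotient.mk (setoidAt L M E (oi p.1)) s'' = p.2} := ⟨t', ht', rfl⟩
      rw [← h2] at hmem
      obtain ⟨s', hs', hq⟩ := hmem
      exact ⟨s', hs', Quotient.exact hq⟩
  have hinj : Function.Injective (Quotient.lift (s := setoidAt L M E γ) F hwd) := by
    intro x y
    induction' x using Quotient.ind with s
    induction' y using Quotient.ind with t
    intro h
    exact Quotient.sound (hinj2 s t h)
  refine (Cardinal.mk_le_of_injective hinj).trans ?_
  have hsig : #(Σ j : γ.ToType, Quotient (setoidAt L M E (oi j))) ≤ bethAt θ γ := by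
    rw [Cardinal.mk_sigma]
    refine le_trans (Cardinal.sum_le_sum _ (fun _ => bethAt θ γ) ?_) ?_
    · intro j
      refine (IH (oi j) (hoi j)).trans (bethAt_mono ?_)
      exact Order.succ_le_of_lt (hoi j)
    · rw [Cardinal.sum_const', Cardinal.mk_toType]
      calc γ.card * bethAt θ γ ≤ bethAt θ γ * bethAt θ γ :=
            mul_le_mul' (card_le_bethAt γ) le_rfl
        _ = bethAt θ γ := Cardinal.mul_eq_self (aleph0_le_bethAt hθ γ)
  calc #(Quotient (setoidAt L M E 0) × Set (Σ j : γ.ToType, Quotient (setoidAt L M E (oi j))))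
      = #(Quotient (setoidAt L M E 0)) *
        #(Set (Σ j : γ.ToType, Quotient (setoidAt L M E (oi j)))) := by
        simp only [Cardinal.mk_prod, Cardinal.lift_id, Cardinal.lift_id']
    _ ≤ 2 ^ θ * 2 ^ bethAt θ γ := by
        refine mul_le_mul' (mk_quotient_zero_le hθ hL hS) ?_
        rw [Cardinal.mk_set]
        exact Cardinal.power_le_power_left two_ne_zero hsig
    _ = 2 ^ (θ + bethAt θ γ) := (Cardinal.power_add _ _ _).symm
    _ = 2 ^ bethAt θ γ := by rw [Cardinal.add_eq_right (aleph0_le_bethAt hθ γ) (le_bethAt γ)]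
    _ = bethAt θ (succ γ) := (bethAt_succ γ).symm

end Counting2

end DGPaper
namespace DGPaper
open Order

section BFUnfold

variable {L : FirstOrder.Language.{u, u}} {M N : Type u} [L.Structure M] [L.Structure N]
variable {θ : Cardinal.{u}}

theorem mem_BF_iff {γ : Ordinal.{u}} {g : Set (M × N)} :
    g ∈ BF L M N θ γ ↔ IsPartialIso L M N g ∧ #g ≤ θ ∧
      ∀ γ' < γ,
        (∀ A : Set M, #A ≤ θ →
          ∃ g', g' ∈ BF L M N θ γ' ∧ g ⊆ g' ∧ A ⊆ Prod.fst '' g') ∧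
        (∀ B : Set N, #B ≤ θ →
          ∃ g', g' ∈ BF L M N θ γ' ∧ g ⊆ g' ∧ B ⊆ Prod.snd '' g') := by
  have h := WellFounded.fix_eq (C := fun _ : Ordinal.{u} => Set (Set (M × N)))
    Ordinal.lt_wf (fun γ IH =>
      {g | IsPartialIso L M N g ∧ #g ≤ θ ∧
        ∀ γ' (h : γ' < γ),
          (∀ A : Set M, #A ≤ θ →
            ∃ g', g' ∈ IH γ' h ∧ g ⊆ g' ∧ A ⊆ Prod.fst '' g') ∧
          (∀ B : Set N, #B ≤ θ →
            ∃ g', g' ∈ IH γ' h ∧ g ⊆ g' ∧ B ⊆ Prod.snd '' g')}) γ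
  have h2 : BF L M N θ γ = {g | IsPartialIso L M N g ∧ #g ≤ θ ∧
      ∀ γ' (_ : γ' < γ),
        (∀ A : Set M, #A ≤ θ →
          ∃ g', g' ∈ BF L M N θ γ' ∧ g ⊆ g' ∧ A ⊆ Prod.fst '' g') ∧
        (∀ B : Set N, #B ≤ θ →
          ∃ g', g' ∈ BF L M N θ γ' ∧ g ⊆ g' ∧ B ⊆ Prod.snd '' g')} := h
  rw [h2]
  exact Iff.rfl

end BFUnfold

section Witness

variable {L : FirstOrder.Language.{u, u}} {M : Type u} [L.Structure M] {S : Type u}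
variable {θ : Cardinal.{u}}

open scoped Classical in
variable (L M) in
/-- A choice of a `γ'`-equivalent extension with prescribed restriction. -/
noncomputable def Wfun (E : S ≃ S ⊕ S) (γ' : Ordinal.{u})
    (q : Quotient (setoidAt L M E γ')) (t : S → M) : S → M :=
  if h : ∃ u : S → M, Quotient.mk (setoidAt L M E γ') u = q ∧ u ∘ (E.symm ∘ Sum.inl) = t
  then h.choose else t

theorem Wfun_spec {E : S ≃ S ⊕ S} (γ' : Ordinal.{u}) (t'' : S → M) :
    (Wfun L M E γ' (Quotient.mk (setoidAt L M E γ') t'') (t'' ∘ (E.symm ∘ Sum.inl))) ∘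
        (E.symm ∘ Sum.inl) = t'' ∘ (E.symm ∘ Sum.inl) ∧
      equivAt L M E γ' t''
        (Wfun L M E γ' (Quotient.mk (setoidAt L M E γ') t'') (t'' ∘ (E.symm ∘ Sum.inl))) := by
  have h : ∃ u : S → M, Quotient.mk (setoidAt L M E γ') u =
      Quotient.mk (setoidAt L M E γ') t'' ∧
      u ∘ (E.symm ∘ Sum.inl) = t'' ∘ (E.symm ∘ Sum.inl) := ⟨t'', rfl, rfl⟩
  rw [Wfun]
  rw [dif_pos h]
  exact ⟨h.choose_spec.2, equivAt_symm (Quotient.exact h.choose_spec.1)⟩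

variable (L M) in
/-- One step of the witness-closure operator. -/
noncomputable def Wit (E : S ≃ S ⊕ S) (β : Ordinal.{u}) (X : Set M) : Set M :=
  X ∪ ⋃ (p : Σ j : β.ToType,
      Quotient (setoidAt L M E ((((Ordinal.ToType.mk (o := β))).symm j : Set.Iio β) : Ordinal.{u})) ×
      {t : S → M // Set.range t ⊆ X}),
    Set.range (Wfun L M E ((((Ordinal.ToType.mk (o := β))).symm p.1 : Set.Iio β) : Ordinal.{u})
      p.2.1 (p.2.2 : S → M))

variable {E : S ≃ S ⊕ S} {β : Ordinal.{u}}

theorem subset_Wit {X : Set M} : X ⊆ Wit L M E β X := Set.subset_union_left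

theorem Wit_mono {X Y : Set M} (hXY : X ⊆ Y) : Wit L M E β X ⊆ Wit L M E β Y := by
  rintro x (hx | hx)
  · exact Or.inl (hXY hx)
  · rw [Set.mem_iUnion] at hx
    obtain ⟨⟨j, q, t, ht⟩, hx⟩ := hx
    exact Or.inr (Set.mem_iUnion.2 ⟨⟨j, q, t, ht.trans hXY⟩, hx⟩)

theorem Wit_witness {X : Set M} {t : S → M} (htX : Set.range t ⊆ X) (j : β.ToType)
    (t'' : S → M) (ht'' : t'' ∘ (E.symm ∘ Sum.inl) = t) :
    ∃ t' : S → M, t' ∘ (E.symm ∘ Sum.inl) = t ∧ Set.range t' ⊆ Wit L M E β X ∧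
      equivAt L M E ((((Ordinal.ToType.mk (o := β))).symm j : Set.Iio β) : Ordinal.{u}) t'' t' := by
  subst ht''
  set γ' : Ordinal.{u} := ((((Ordinal.ToType.mk (o := β))).symm j : Set.Iio β) : Ordinal.{u})
  obtain ⟨h1, h2⟩ := Wfun_spec (L := L) (M := M) (E := E) γ' t''
  refine ⟨_, h1, ?_, h2⟩
  intro x hx
  refine Or.inr (Set.mem_iUnion.2 ⟨⟨j, Quotient.mk (setoidAt L M E γ') t'',
    ⟨t'' ∘ (E.symm ∘ Sum.inl), htX⟩⟩, hx⟩)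

theorem mk_Wit_le (hθ : ℵ₀ ≤ θ) (hL : L.card ≤ θ) (hS : #S = θ) {X : Set M}
    (hX : #X ≤ bethAt θ (succ β)) : #(Wit L M E β X : Set M) ≤ bethAt θ (succ β) := by
  set b := bethAt θ β with hb
  set B := bethAt θ (succ β) with hB
  have hbB : b ≤ B := bethAt_mono (le_succ β)
  have hθb : θ ≤ b := le_bethAt β
  have hab : ℵ₀ ≤ b := aleph0_le_bethAt hθ β
  have haB : ℵ₀ ≤ B := aleph0_le_bethAt hθ (succ β)
  have hbθ : b * θ = b := by
    rw [Cardinal.mul_eq_max hab hθ, max_eq_left hθb]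
  have hBθ : B ^ θ = B := by
    rw [hB, bethAt_succ, ← Cardinal.power_mul, hbθ]
  have hQ : ∀ j : β.ToType,
      #(Quotient (setoidAt L M E
        ((((Ordinal.ToType.mk (o := β))).symm j : Set.Iio β) : Ordinal.{u}))) ≤ B := by
    intro j
    refine (mk_quotient_le hθ hL hS _).trans (bethAt_mono ?_)
    exact (Order.succ_le_of_lt (((Ordinal.ToType.mk (o := β))).symm j).2).trans (le_succ β)
  have hT : #{t : S → M // Set.range t ⊆ X} ≤ B := by
    have hinj : Function.Injective (fun (t : {t : S → M // Set.range t ⊆ X}) =>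
        ((fun i => ⟨t.1 i, t.2 (Set.mem_range_self i)⟩) : S → X)) := by
      intro t1 t2 h
      exact Subtype.ext (funext fun i => congrArg Subtype.val (congrFun h i))
    refine (Cardinal.mk_le_of_injective hinj).trans ?_
    rw [Cardinal.mk_arrow]
    simp only [Cardinal.lift_id, Cardinal.lift_id', hS]
    calc (#X) ^ θ ≤ B ^ θ := Cardinal.power_le_power_right hX
      _ = B := hBθ
  have hP : #(Σ j : β.ToType,
      Quotient (setoidAt L M E ((((Ordinal.ToType.mk (o := β))).symm j : Set.Iio β) : Ordinal.{u})) ×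
      {t : S → M // Set.range t ⊆ X}) ≤ B := by
    rw [Cardinal.mk_sigma]
    refine le_trans (Cardinal.sum_le_sum _ (fun _ => B) ?_) ?_
    · intro j
      simp only [Cardinal.mk_prod, Cardinal.lift_id, Cardinal.lift_id']
      calc _ ≤ B * B := mul_le_mul' (hQ j) hT
        _ = B := Cardinal.mul_eq_self haB
    · rw [Cardinal.sum_const', Cardinal.mk_toType]
      calc β.card * B ≤ B * B := mul_le_mul' ((card_le_bethAt β).trans hbB) le_rfl
        _ = B := Cardinal.mul_eq_self haB
  rw [Wit]
  refine le_trans (Cardinal.mk_union_le _ _) ?_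
  have hU : #(⋃ (p : Σ j : β.ToType,
      Quotient (setoidAt L M E ((((Ordinal.ToType.mk (o := β))).symm j : Set.Iio β) : Ordinal.{u})) ×
      {t : S → M // Set.range t ⊆ X}),
      Set.range (Wfun L M E ((((Ordinal.ToType.mk (o := β))).symm p.1 : Set.Iio β) : Ordinal.{u})
        p.2.1 (p.2.2 : S → M)) : Set M) ≤ B := by
    refine le_trans (Cardinal.mk_iUnion_le _) ?_
    have hsup : ⨆ (p : Σ j : β.ToType,
        Quotient (setoidAt L M E ((((Ordinal.ToType.mk (o := β))).symm j : Set.Iio β) : Ordinal.{u})) ×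
        {t : S → M // Set.range t ⊆ X}),
        #(Set.range (Wfun L M E ((((Ordinal.ToType.mk (o := β))).symm p.1 : Set.Iio β) : Ordinal.{u})
          p.2.1 (p.2.2 : S → M)) : Set M) ≤ θ :=
      ciSup_le' fun p => (Cardinal.mk_range_le).trans_eq hS
    calc _ ≤ B * θ := mul_le_mul' hP hsup
      _ ≤ B * B := mul_le_mul' le_rfl (hθb.trans hbB)
      _ = B := Cardinal.mul_eq_self haB
  calc #X + _ ≤ B + B := add_le_add hX hU
    _ = B := Cardinal.add_eq_self haB

end Witness

end DGPaper
namespace DGPaper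
open Order

section Chain

variable {L : FirstOrder.Language.{u, u}} {M : Type u} [L.Structure M] {S : Type u}
variable {θ : Cardinal.{u}}

variable (L M) in
/-- The transfinite chain of witness-closed sets. -/
noncomputable def NN (E : S ≃ S ⊕ S) (β : Ordinal.{u}) (m0 : M) : Ordinal.{u} → Set M :=
  WellFounded.fix (C := fun _ : Ordinal.{u} => Set M) Ordinal.lt_wf fun δ IH =>
    insert m0 (⋃ j : δ.ToType,
      (Substructure.closure L
        (Wit L M E β (IH ((((Ordinal.ToType.mk (o := δ))).symm j : Set.Iio δ) : Ordinal.{u})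
          (((Ordinal.ToType.mk (o := δ))).symm j).2)) : Set M))

variable {E : S ≃ S ⊕ S} {β : Ordinal.{u}} {m0 : M}

theorem NN_eq (δ : Ordinal.{u}) :
    NN L M E β m0 δ = insert m0 (⋃ j : δ.ToType,
      (Substructure.closure L
        (Wit L M E β (NN L M E β m0
          ((((Ordinal.ToType.mk (o := δ))).symm j : Set.Iio δ) : Ordinal.{u}))) : Set M)) := by
  have h := WellFounded.fix_eq (C := fun _ : Ordinal.{u} => Set M) Ordinal.lt_wf
    (fun δ IH => insert m0 (⋃ j : δ.ToType,
      (Substructure.closure L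
        (Wit L M E β (IH ((((Ordinal.ToType.mk (o := δ))).symm j : Set.Iio δ) : Ordinal.{u})
          (((Ordinal.ToType.mk (o := δ))).symm j).2)) : Set M))) δ
  exact h

theorem m0_mem_NN (δ : Ordinal.{u}) : m0 ∈ NN L M E β m0 δ := by
  rw [NN_eq]; exact Set.mem_insert _ _

theorem NN_subset_cl (δ : Ordinal.{u}) :
    NN L M E β m0 δ ⊆ (Substructure.closure L (Wit L M E β (NN L M E β m0 δ)) : Set M) :=
  fun _ hx => Substructure.subset_closure (subset_Wit hx)

theorem cl_subset_NN {δ' δ : Ordinal.{u}} (h : δ' < δ) :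
    (Substructure.closure L (Wit L M E β (NN L M E β m0 δ')) : Set M) ⊆ NN L M E β m0 δ := by
  intro x hx
  rw [NN_eq δ]
  refine Set.mem_insert_iff.2 (Or.inr (Set.mem_iUnion.2 ⟨(Ordinal.ToType.mk (o := δ)) ⟨δ', h⟩, ?_⟩))
  have he : ((((Ordinal.ToType.mk (o := δ))).symm ((Ordinal.ToType.mk (o := δ)) ⟨δ', h⟩) :
      Set.Iio δ) : Ordinal.{u}) = δ' := by
    simp only [OrderIso.symm_apply_apply]
  rw [he]
  exact hx

theorem NN_mono {δ1 δ2 : Ordinal.{u}} (h : δ1 ≤ δ2) :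
    NN L M E β m0 δ1 ⊆ NN L M E β m0 δ2 := by
  rcases eq_or_lt_of_le h with rfl | h
  · exact subset_rfl
  · exact (NN_subset_cl δ1).trans (cl_subset_NN h)

theorem mk_NN_le (hθ : ℵ₀ ≤ θ) (hL : L.card ≤ θ) (hS : #S = θ) :
    ∀ δ ≤ (Order.succ θ).ord, #(NN L M E β m0 δ : Set M) ≤ bethAt θ (succ β) := by
  intro δ
  induction' δ using Ordinal.induction with δ IH
  intro hδ
  set B := bethAt θ (succ β) with hB
  have haB : ℵ₀ ≤ B := aleph0_le_bethAt hθ (succ β)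
  have h2B : (2 : Cardinal.{u}) ^ θ ≤ B := by
    rw [hB, bethAt_succ]
    exact Cardinal.power_le_power_left two_ne_zero (le_bethAt β)
  have hcl : ∀ j : δ.ToType,
      #(Substructure.closure L (Wit L M E β (NN L M E β m0
        ((((Ordinal.ToType.mk (o := δ))).symm j : Set.Iio δ) : Ordinal.{u}))) : Set M) ≤ B := by
    intro j
    have hlt : ((((Ordinal.ToType.mk (o := δ))).symm j : Set.Iio δ) : Ordinal.{u}) < δ :=
      (((Ordinal.ToType.mk (o := δ))).symm j).2
    have hWit : #(Wit L M E β (NN L M E β m0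
        ((((Ordinal.ToType.mk (o := δ))).symm j : Set.Iio δ) : Ordinal.{u})) : Set M) ≤ B :=
      mk_Wit_le hθ hL hS (IH _ hlt (le_of_lt (lt_of_lt_of_le hlt hδ)))
    have h1 := Substructure.lift_card_closure_le (L := L) (M := M)
      (s := Wit L M E β (NN L M E β m0 ((((Ordinal.ToType.mk (o := δ))).symm j : Set.Iio δ) :
        Ordinal.{u})))
    simp only [Cardinal.lift_id, Cardinal.lift_id'] at h1
    refine h1.trans (max_le haB ?_)
    have hFS : #(Σ i, L.Functions i) ≤ θ := by
      refine le_trans (Cardinal.mk_le_of_injective (f := fun p => (Sum.inl p : L.Symbols))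
        (fun a b h => by simpa using h)) hL
    calc _ ≤ B + θ := add_le_add hWit hFS
      _ ≤ B + B := add_le_add le_rfl ((le_bethAt β).trans (bethAt_mono (le_succ β)))
      _ = B := Cardinal.add_eq_self haB
  rw [NN_eq]
  refine le_trans (Cardinal.mk_insert_le) ?_
  have hU : #(⋃ j : δ.ToType,
      (Substructure.closure L (Wit L M E β (NN L M E β m0
        ((((Ordinal.ToType.mk (o := δ))).symm j : Set.Iio δ) : Ordinal.{u}))) : Set M)) ≤ B := by
    refine le_trans (Cardinal.mk_iUnion_le _) ?_
    have hsup := ciSup_le' hcl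
    have hcard : #δ.ToType ≤ B := by
      rw [Cardinal.mk_toType]
      refine le_trans (Ordinal.card_le_card hδ) ?_
      rw [Cardinal.card_ord]
      exact le_trans (Order.succ_le_of_lt (Cardinal.cantor θ)) h2B
    calc _ ≤ B * B := mul_le_mul' hcard hsup
      _ = B := Cardinal.mul_eq_self haB
  calc _ ≤ B + 1 := add_le_add hU le_rfl
    _ ≤ B + B := add_le_add le_rfl (le_trans (le_of_lt Cardinal.one_lt_aleph0) haB)
    _ = B := Cardinal.add_eq_self haB

theorem exists_stage (hθ : ℵ₀ ≤ θ) {ι : Type u} (hι : #ι < Order.succ θ) (x : ι → M)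
    (hx : ∀ i, x i ∈ NN L M E β m0 (Order.succ θ).ord) :
    ∃ δ < (Order.succ θ).ord, ∀ i, x i ∈ NN L M E β m0 δ := by
  have hT : Order.IsSuccLimit ((Order.succ θ).ord) := Cardinal.isSuccLimit_ord (hθ.trans (le_succ θ))
  have hstep : ∀ i, ∃ δ, δ < (Order.succ θ).ord ∧ x i ∈ NN L M E β m0 δ := by
    intro i
    have := hx i
    rw [NN_eq] at this
    rcases Set.mem_insert_iff.1 this with h | h
    · refine ⟨0, ?_, h ▸ m0_mem_NN 0⟩
      exact hT.bot_lt
    · rw [Set.mem_iUnion] at h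
      obtain ⟨j, hj⟩ := h
      refine ⟨succ ((((Ordinal.ToType.mk (o := (Order.succ θ).ord))).symm j : Set.Iio _) :
        Ordinal.{u}), hT.succ_lt (((Ordinal.ToType.mk (o := (Order.succ θ).ord))).symm j).2, ?_⟩
      exact cl_subset_NN (lt_succ _) hj
  choose δf hδf1 hδf2 using hstep
  refine ⟨⨆ i, δf i, ?_, ?_⟩
  · refine Ordinal.iSup_lt_ord ?_ hδf1
    rwa [(Cardinal.isRegular_succ hθ).cof_eq]
  · intro i
    exact NN_mono (Ordinal.le_iSup δf i) (hδf2 i)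

end Chain

end DGPaper
namespace DGPaper
open Order

section Final

variable {L : FirstOrder.Language.{u, u}} {M : Type u} [L.Structure M] {S : Type u}
variable {θ : Cardinal.{u}}

theorem isPartialIso_toSub {NS : L.Substructure M} {s t : S → M}
    (htN : Set.range t ⊆ (NS : Set M)) (h : IsPartialIso L M M (pairGraph s t)) :
    IsPartialIso L M NS
      (Set.range fun i => (s i, (⟨t i, htN (Set.mem_range_self i)⟩ : NS))) := by
  obtain ⟨h1, h2, h3, h4⟩ := h
  refine ⟨?_, ?_, ?_, ?_⟩
  · rintro a b b' ⟨i, hi⟩ ⟨j, hj⟩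
    obtain ⟨hi1, hi2⟩ := Prod.ext_iff.1 hi
    obtain ⟨hj1, hj2⟩ := Prod.ext_iff.1 hj
    simp only at hi1 hi2 hj1 hj2
    have : t i = t j := h1 (⟨i, rfl⟩ : (s i, t i) ∈ pairGraph s t)
      (by rw [hi1, ← hj1]; exact ⟨j, rfl⟩)
    rw [← hi2, ← hj2]
    exact Subtype.ext this
  · rintro a a' b ⟨i, hi⟩ ⟨j, hj⟩
    obtain ⟨hi1, hi2⟩ := Prod.ext_iff.1 hi
    obtain ⟨hj1, hj2⟩ := Prod.ext_iff.1 hj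
    simp only at hi1 hi2 hj1 hj2
    have htij : t i = t j := by
      have := hi2.trans hj2.symm
      exact congrArg Subtype.val this
    have : s i = s j := h2 (⟨i, rfl⟩ : (s i, t i) ∈ pairGraph s t)
      (by rw [htij]; exact ⟨j, rfl⟩)
    rw [← hi1, ← hj1, this]
  · intro n R x y hxy
    choose i hi using hxy
    have hx : x = fun k => s (i k) := funext fun k => ((Prod.ext_iff.1 (hi k).symm).1 : _)
    have hy : ∀ k, (y k : M) = t (i k) := fun k =>
      (congrArg Subtype.val ((Prod.ext_iff.1 (hi k).symm).2) : _)
    have hyy : (fun k => (y k : M)) = fun k => t (i k) := funext hy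
    show Structure.RelMap R x ↔ Structure.RelMap R fun k => (y k : M)
    rw [hx, hyy]
    exact h3 n R _ _ fun k => ⟨i k, rfl⟩
  · intro n f x y hxy
    choose i hi using hxy
    have hx : x = fun k => s (i k) := funext fun k => ((Prod.ext_iff.1 (hi k).symm).1 : _)
    have hy : ∀ k, (y k : M) = t (i k) := fun k =>
      (congrArg Subtype.val ((Prod.ext_iff.1 (hi k).symm).2) : _)
    have hyy : (fun k => (y k : M)) = fun k => t (i k) := funext hy
    subst hx
    constructor
    · rintro b ⟨j, hj⟩
      obtain ⟨hj1, hj2⟩ := Prod.ext_iff.1 hj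
      simp only at hj1 hj2
      have hstep : t j = Structure.funMap f fun k => t (i k) :=
        (h4 n f _ (fun k => t (i k)) fun k => ⟨i k, rfl⟩).1 (t j)
          (by rw [← hj1]; exact ⟨j, rfl⟩)
      refine Subtype.ext ?_
      show (b : M) = ((Structure.funMap f y : NS) : M)
      rw [← hj2]
      show t j = Structure.funMap f fun k => (y k : M)
      rw [hyy]
      exact hstep
    · rintro a ⟨j, hj⟩
      obtain ⟨hj1, hj2⟩ := Prod.ext_iff.1 hj
      simp only at hj1 hj2
      have hj2' : t j = Structure.funMap f fun k => t (i k) := by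
        rw [← hyy]
        exact congrArg Subtype.val hj2
      have hstep : s j = Structure.funMap f fun k => s (i k) :=
        (h4 n f (fun k => s (i k)) (fun k => t (i k)) fun k => ⟨i k, rfl⟩).2 (s j)
          (by rw [← hj2']; exact ⟨j, rfl⟩)
      rw [← hj1]
      exact hstep

theorem lemB {E : S ≃ S ⊕ S} {β : Ordinal.{u}} [Nonempty S]
    (hθ : ℵ₀ ≤ θ) (hS : #S = θ) {NS : L.Substructure M}
    (hstar : ∀ t : S → M, Set.range t ⊆ (NS : Set M) → ∀ γ' < β, ∀ t'' : S → M,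
      t'' ∘ (E.symm ∘ Sum.inl) = t →
      ∃ t' : S → M, t' ∘ (E.symm ∘ Sum.inl) = t ∧ Set.range t' ⊆ (NS : Set M) ∧
        equivAt L M E γ' t'' t') :
    ∀ γ ≤ β, ∀ s t : S → M, equivAt L M E γ s t → ∀ htN : Set.range t ⊆ (NS : Set M),
      (Set.range fun i => (s i, (⟨t i, htN (Set.mem_range_self i)⟩ : NS))) ∈
        BF L M NS θ γ := by
  intro γ
  induction' γ using Ordinal.induction with γ IH
  intro hγβ s t he htN
  rw [mem_BF_iff]
  refine ⟨isPartialIso_toSub htN (equivAt_isPartialIso he), ?_, ?_⟩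
  · exact Cardinal.mk_range_le.trans_eq hS
  · intro γ' hγ'
    have hγ'β : γ' < β := lt_of_lt_of_le hγ' hγβ
    constructor
    · intro A hA
      obtain ⟨s', hs', hAs', _⟩ := extendCover (E := E) s A (hA.trans_eq hS.symm)
      obtain ⟨t'', ht'', he1⟩ := (((equivAt_iff E γ s t).1 he).2 γ' hγ').1 s' hs'
      obtain ⟨t', ht', htN', he2⟩ := hstar t htN γ' hγ'β t'' ht''
      have he3 : equivAt L M E γ' s' t' := equivAt_trans he1 he2
      refine ⟨_, IH γ' hγ' (le_of_lt hγ'β) s' t' he3 htN', ?_, ?_⟩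
      · rintro p ⟨i, rfl⟩
        refine ⟨E.symm (Sum.inl i), ?_⟩
        have h1 : s' (E.symm (Sum.inl i)) = s i := congrFun hs' i
        have h2 : t' (E.symm (Sum.inl i)) = t i := congrFun ht' i
        exact Prod.ext h1 (Subtype.ext h2)
      · intro a ha
        obtain ⟨i, hi⟩ := hAs' ha
        exact ⟨(s' i, ⟨t' i, htN' (Set.mem_range_self i)⟩), ⟨i, rfl⟩, hi⟩
    · intro B hB
      have hB' : #(Subtype.val '' B : Set M) ≤ θ := Cardinal.mk_image_le.trans hB
      obtain ⟨t', ht', hBt', hrt'⟩ := extendCover (E := E) t (Subtype.val '' B)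
        (hB'.trans_eq hS.symm)
      have htN' : Set.range t' ⊆ (NS : Set M) := by
        refine hrt'.trans ?_
        rintro x (hx | hx)
        · exact htN hx
        · obtain ⟨b, _, rfl⟩ := hx
          exact b.2
      obtain ⟨s', hs', he1⟩ := (((equivAt_iff E γ s t).1 he).2 γ' hγ').2 t' ht'
      refine ⟨_, IH γ' hγ' (le_of_lt hγ'β) s' t' he1 htN', ?_, ?_⟩
      · rintro p ⟨i, rfl⟩
        refine ⟨E.symm (Sum.inl i), ?_⟩
        have h1 : s' (E.symm (Sum.inl i)) = s i := congrFun hs' i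
        have h2 : t' (E.symm (Sum.inl i)) = t i := congrFun ht' i
        exact Prod.ext h1 (Subtype.ext h2)
      · intro b hb
        obtain ⟨i, hi⟩ := hBt' ⟨b, hb, rfl⟩
        exact ⟨(s' i, ⟨t' i, htN' (Set.mem_range_self i)⟩), ⟨i, rfl⟩, Subtype.ext hi⟩

theorem BF_empty [IsEmpty M] {NS : L.Substructure M} (γ : Ordinal.{u}) :
    (∅ : Set (M × NS)) ∈ BF L M NS θ γ := by
  haveI : IsEmpty NS := ⟨fun x => IsEmpty.false (x : M)⟩
  induction' γ using Ordinal.induction with γ IH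
  rw [mem_BF_iff]
  refine ⟨⟨?_, ?_, ?_, ?_⟩, ?_, ?_⟩
  · rintro a; exact (IsEmpty.false a).elim
  · rintro a; exact (IsEmpty.false a).elim
  · intro n R x y _; exact (IsEmpty.false (x 0)).elim
  · intro n f x y _
    exact ⟨fun b hb => absurd hb (Set.notMem_empty _),
      fun a ha => absurd ha (Set.notMem_empty _)⟩
  · rw [Cardinal.mk_emptyCollection]
    exact zero_le
  · intro γ' hγ'
    constructor
    · intro A hA
      refine ⟨∅, IH γ' hγ', subset_rfl, ?_⟩
      rw [Set.eq_empty_of_isEmpty A]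
      exact Set.empty_subset _
    · intro B hB
      refine ⟨∅, IH γ' hγ', subset_rfl, ?_⟩
      rw [Set.eq_empty_of_isEmpty B]
      exact Set.empty_subset _

end Final

end DGPaper
open DGPaper in
/-- Karp.  Let `θ` be an infinite cardinal, `β` an ordinal, and `M` a
structure in a vocabulary of cardinality `≤ θ`.  Then there is a substructure `N` of `M`
of cardinality at most `ℶ_{β+1}(θ)` such that `M ≡^β_θ N`. -/
theorem karp_small_substructure (L : FirstOrder.Language.{u, u})
    (M : Type u) [L.Structure M]
    (θ : Cardinal.{u}) (hθ : Cardinal.aleph0 ≤ θ) (hL : L.card ≤ θ)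
    (β : Ordinal.{u}) :
    ∃ S : L.Substructure M, #S ≤ bethAt θ (β + 1) ∧ BFEquiv L M (↥S) θ β := by
  classical
  by_cases hM : IsEmpty M
  · haveI := hM
    haveI : IsEmpty (⊥ : L.Substructure M) := ⟨fun x => IsEmpty.false (x : M)⟩
    refine ⟨⊥, ?_, ⟨∅, BF_empty β⟩⟩
    rw [Cardinal.mk_eq_zero]
    exact zero_le
  · rw [not_isEmpty_iff] at hM
    obtain ⟨m0⟩ := hM
    set S : Type u := (Cardinal.ord θ).ToType with hSdef
    have hS : #S = θ := by rw [hSdef, Cardinal.mk_toType, Cardinal.card_ord]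
    haveI : Nonempty S := Cardinal.mk_ne_zero_iff.1
      (by rw [hS]; exact (Cardinal.aleph0_pos.trans_le hθ).ne')
    have hEE : #S = #(S ⊕ S) := by
      rw [Cardinal.mk_sum, Cardinal.lift_id, hS, Cardinal.add_eq_self hθ]
    obtain ⟨E⟩ := Cardinal.eq.1 hEE
    set T := (Order.succ θ).ord with hTdef
    have hclosed : ∀ {n} (f : L.Functions n) (x : Fin n → M),
        (∀ i, x i ∈ NN L M E β m0 T) → Structure.funMap f x ∈ NN L M E β m0 T := by
      intro n f x hx
      have hn : #(ULift.{u} (Fin n)) < Order.succ θ := by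
        simp only [Cardinal.mk_uLift, Cardinal.mk_fin, Cardinal.lift_natCast]
        exact lt_of_lt_of_le (Cardinal.nat_lt_aleph0 n) (hθ.trans (Order.le_succ θ))
      obtain ⟨δ, hδT, hδ⟩ := exists_stage hθ hn (fun i => x i.down) fun i => hx i.down
      have hmem : Structure.funMap f x ∈
          Substructure.closure L (Wit L M E β (NN L M E β m0 δ)) :=
        Substructure.fun_mem _ f x fun i => NN_subset_cl δ (hδ ⟨i⟩)
      exact cl_subset_NN hδT hmem
    refine ⟨⟨NN L M E β m0 T, hclosed⟩, ?_, ?_⟩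
    · have h := mk_NN_le (E := E) (β := β) (m0 := m0) hθ hL hS T le_rfl
      rw [Ordinal.add_one_eq_succ]
      exact h
    · set NS : L.Substructure M := ⟨NN L M E β m0 T, hclosed⟩ with hNSdef
      have hstar : ∀ t : S → M, Set.range t ⊆ (NS : Set M) → ∀ γ' < β, ∀ t'' : S → M,
          t'' ∘ (E.symm ∘ Sum.inl) = t →
          ∃ t' : S → M, t' ∘ (E.symm ∘ Sum.inl) = t ∧ Set.range t' ⊆ (NS : Set M) ∧
            equivAt L M E γ' t'' t' := by
        intro t htN γ' hγ' t'' ht''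
        obtain ⟨δ, hδT, hδ⟩ := exists_stage (E := E) (β := β) (m0 := m0) hθ
          (by rw [hS]; exact Order.lt_succ θ) t
          fun i => (htN (Set.mem_range_self i) : t i ∈ NN L M E β m0 T)
        have htX : Set.range t ⊆ NN L M E β m0 δ := by
          rintro x ⟨i, rfl⟩; exact hδ i
        obtain ⟨t', h1, h2, h3⟩ := Wit_witness (L := L) (M := M) (E := E) (β := β)
          (X := NN L M E β m0 δ) htX
          ((Ordinal.ToType.mk (o := β)) ⟨γ', hγ'⟩) t'' ht''
        have he : ((((Ordinal.ToType.mk (o := β))).symm ((Ordinal.ToType.mk (o := β)) ⟨γ', hγ'⟩) :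
            Set.Iio β) : Ordinal.{u}) = γ' := by
          simp only [OrderIso.symm_apply_apply]
        refine ⟨t', h1, ?_, ?_⟩
        · refine h2.trans ?_
          intro x hx
          exact cl_subset_NN hδT (Substructure.subset_closure hx)
        · rw [he] at h3
          exact h3
      have hrange : Set.range (fun _ : S => m0) ⊆ (NS : Set M) := by
        rintro x ⟨i, rfl⟩; exact m0_mem_NN T
      exact ⟨_, lemB hθ hS hstar β le_rfl (fun _ => m0) (fun _ => m0)
        (equivAt_refl β _) hrange⟩
end
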